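/- arXiv:1801.09716 — 3 statements merged into one kernel-verified Lean document; each statement's English description precedes it below -/
import Mathlib

section
/- Let S be an isometry on a complex Hilbert space H and let L be a closed S-reducing subspace of H, with P_L the orthogonal projection onto L and P^uni the orthogonal projection onto H^uni. Then the following are equivalent: (1) S is unitary on L, i.e. S(L) = L; (2) L ⊆ H^uni; (3) P_L ∘ P^uni = P_L. -/
open ContinuousLinearMap

variable {H : Type*} [NormedAddCommGroup H] [InnerProductSpace ℂ H] [CompleteSpace H]

/-- The purely isometric part `H^iso`: the closed linear span of the subspaces
`S^k (ker S*)`, `k ≥ 0`. -/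
noncomputable def Hiso (S : H →L[ℂ] H) : Submodule ℂ H :=
  (⨆ k : ℕ, Submodule.map ((S ^ k : H →L[ℂ] H) : H →ₗ[ℂ] H) (LinearMap.ker ((adjoint S : H →L[ℂ] H) : H →ₗ[ℂ] H))).topologicalClosure

/-- The unitary part `H^uni := ⋂_{k≥0} S^k (H)`. -/
noncomputable def Huni (S : H →L[ℂ] H) : Submodule ℂ H :=
  ⨅ k : ℕ, LinearMap.range ((S ^ k : H →L[ℂ] H) : H →ₗ[ℂ] H)

/-- A closed subspace `L` reduces `S` if it is invariant under `S` and `S*`. -/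
def Reduces (S : H →L[ℂ] H) (L : Submodule ℂ H) : Prop :=
  (∀ x ∈ L, S x ∈ L) ∧ ∀ x ∈ L, adjoint S x ∈ L

/-- `S` is unitary on `L`: `S` maps `L` onto `L`. -/
def UnitaryOn (S : H →L[ℂ] H) (L : Submodule ℂ H) : Prop :=
  Submodule.map (S : H →ₗ[ℂ] H) L = L

/-- `S` is a pure isometry on the `S`-invariant subspace `L`: `{0}` is the only
`S`-invariant closed subspace of `L` on which `S` is unitary. -/
def PureOn (S : H →L[ℂ] H) (L : Submodule ℂ H) : Prop :=
  ∀ M : Submodule ℂ H, IsClosed (M : Set H) → M ≤ L → Submodule.map (S : H →ₗ[ℂ] H) M = M → M = ⊥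

/-- `P` is the orthogonal projection of `H` onto the subspace `K`. -/
def IsOrthoProj (P : H →L[ℂ] H) (K : Submodule ℂ H) : Prop :=
  ∀ x, P x ∈ K ∧ x - P x ∈ Kᗮ

lemma isOrthoProj_fix' {P : H →L[ℂ] H} {K : Submodule ℂ H} (hP : IsOrthoProj P K)
    {x : H} (hx : x ∈ K) : P x = x := by
  have h2 := (hP x).2
  have hmem : x - P x ∈ K := sub_mem hx (hP x).1
  have : x - P x = 0 := by
    have := (Submodule.mem_orthogonal _ _).mp h2 _ hmem
    simpa [inner_self_eq_zero] using this
  have := sub_eq_zero.mp this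
  exact this.symm

lemma isOrthoProj_ker {P : H →L[ℂ] H} {K : Submodule ℂ H} (hP : IsOrthoProj P K)
    {y : H} (hy : y ∈ Kᗮ) : P y = 0 := by
  have h1 := (hP y).1
  have h2 := (hP y).2
  have hmem : P y ∈ Kᗮ := by
    have : P y = y - (y - P y) := by abel
    rw [this]; exact sub_mem hy h2
  have := (Submodule.mem_orthogonal _ _).mp hmem _ h1
  simpa [inner_self_eq_zero] using this

theorem statement3 (S : H →L[ℂ] H) (hS : adjoint S * S = 1)
    (L : Submodule ℂ H) (hLclosed : IsClosed (L : Set H)) (hLred : Reduces S L)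
    (PL Puni : H →L[ℂ] H)
    (hPL : IsOrthoProj PL L) (hPuni : IsOrthoProj Puni (Huni S)) :
    [UnitaryOn S L, L ≤ Huni S, PL * Puni = PL].TFAE := by
  tfae_have 1 → 2
  · intro h
    have hk : ∀ k : ℕ, Submodule.map ((S ^ k : H →L[ℂ] H) : H →ₗ[ℂ] H) L = L := by
      intro k
      induction k with
      | zero =>
          ext x
          simp [Submodule.mem_map, pow_zero, one_apply]
      | succ n ih =>
          have hstep : Submodule.map ((S ^ (n+1) : H →L[ℂ] H) : H →ₗ[ℂ] H) L
              = Submodule.map (S : H →ₗ[ℂ] H) (Submodule.map ((S ^ n : H →L[ℂ] H) : H →ₗ[ℂ] H) L) := by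
            ext x
            simp only [Submodule.mem_map, pow_succ', mul_apply, ContinuousLinearMap.coe_coe]
            constructor
            · rintro ⟨y, hy, rfl⟩; exact ⟨(S ^ n) y, ⟨y, hy, rfl⟩, rfl⟩
            · rintro ⟨z, ⟨y, hy, rfl⟩, rfl⟩; exact ⟨y, hy, rfl⟩
          rw [hstep, ih, h]
    refine le_iInf fun k => ?_
    rw [← hk k]
    exact Submodule.map_le_iff_le_comap.mpr fun x hx => ⟨x, rfl⟩
  tfae_have 2 → 3
  · intro h
    ext x
    have hmem : x - Puni x ∈ Lᗮ := Submodule.orthogonal_le h (hPuni x).2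
    have h0 : PL (x - Puni x) = 0 := isOrthoProj_ker hPL hmem
    rw [map_sub, sub_eq_zero] at h0
    simpa [mul_apply] using h0.symm
  tfae_have 3 → 2
  · intro h x hx
    have hPLx : PL x = x := isOrthoProj_fix' hPL hx
    have hw0 : PL (x - Puni x) = 0 := by
      have hx3 : PL (Puni x) = PL x := congrArg (fun T : H →L[ℂ] H => T x) h
      rw [map_sub, hx3, hPLx, sub_self]
    set w := x - Puni x with hw
    have hwHo : w ∈ (Huni S)ᗮ := (hPuni x).2
    have hwL : w ∈ Lᗮ := by
      have h2 := (hPL w).2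
      rwa [hw0, sub_zero] at h2
    have hwz : w = 0 := by
      have h1 : inner ℂ x w = (0 : ℂ) :=
        Submodule.inner_right_of_mem_orthogonal hx hwL
      have h2 : inner ℂ (Puni x) w = (0 : ℂ) :=
        Submodule.inner_right_of_mem_orthogonal (hPuni x).1 hwHo
      have h3 : inner ℂ w w = (0 : ℂ) := by
        rw [hw, inner_sub_left, h1, h2, sub_zero]
      simpa [inner_self_eq_zero] using h3
    have hx' : x = Puni x := by
      have := sub_eq_zero.mp hwz
      simpa using this
    rw [hx']
    exact (hPuni x).1
  tfae_have 2 → 1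
  · intro h
    rw [UnitaryOn]
    apply le_antisymm
    · rintro _ ⟨y, hy, rfl⟩; exact hLred.1 y hy
    · intro x hx
      have hx1 : x ∈ LinearMap.range ((S ^ 1 : H →L[ℂ] H) : H →ₗ[ℂ] H) :=
        iInf_le (fun k => LinearMap.range ((S ^ k : H →L[ℂ] H) : H →ₗ[ℂ] H)) 1 (h hx)
      obtain ⟨y, hy⟩ := hx1
      rw [pow_one, ContinuousLinearMap.coe_coe] at hy
      have hy' : y = adjoint S x := by
        have : adjoint S (S y) = y := congrArg (fun T : H →L[ℂ] H => T y) hS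
        rw [← hy, this]
      exact ⟨y, hy' ▸ hLred.2 x hx, hy⟩
  tfae_finish
end

section
/- Let S be an isometry on a complex Hilbert space H and let L be a closed S-reducing subspace of H, with P_L the orthogonal projection onto L and P^iso the orthogonal projection onto H^iso. Then the following are equivalent: (1) S is a pure isometry on L; (2) L ⊆ H^iso; (3) P_L ∘ P^iso = P_L. -/
open ContinuousLinearMap

open scoped InnerProductSpace

variable {H : Type*} [NormedAddCommGroup H] [InnerProductSpace ℂ H] [CompleteSpace H]

section Aux

variable {S : H →L[ℂ] H}

lemma adj_pow (S : H →L[ℂ] H) (k : ℕ) : adjoint (S ^ k) = (adjoint S) ^ k := by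
  rw [← star_eq_adjoint, ← star_eq_adjoint, star_pow]

lemma pow_isom (hS : adjoint S * S = 1) (k : ℕ) : (adjoint S) ^ k * S ^ k = 1 := by
  induction k with
  | zero => simp
  | succ n ih =>
    rw [pow_succ (adjoint S), pow_succ' S, mul_assoc, ← mul_assoc (adjoint S), hS, one_mul, ih]

lemma pow_isom_apply (hS : adjoint S * S = 1) (k : ℕ) (x : H) :
    ((adjoint S) ^ k) ((S ^ k) x) = x := by
  calc ((adjoint S) ^ k) ((S ^ k) x) = ((adjoint S) ^ k * S ^ k) x := rfl
  _ = (1 : H →L[ℂ] H) x := by rw [pow_isom hS]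
  _ = x := rfl

lemma inner_pow (hS : adjoint S * S = 1) (k : ℕ) (a b : H) :
    ⟪(S ^ k) a, (S ^ k) b⟫_ℂ = ⟪a, b⟫_ℂ := by
  calc ⟪(S ^ k) a, (S ^ k) b⟫_ℂ = ⟪a, (adjoint (S ^ k)) ((S ^ k) b)⟫_ℂ :=
        (adjoint_inner_right _ _ _).symm
  _ = ⟪a, b⟫_ℂ := by rw [adj_pow, pow_isom_apply hS]

lemma norm_pow_app (hS : adjoint S * S = 1) (k : ℕ) (a : H) : ‖(S ^ k) a‖ = ‖a‖ := by
  rw [norm_eq_sqrt_re_inner (𝕜 := ℂ), norm_eq_sqrt_re_inner (𝕜 := ℂ) a, inner_pow hS]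

lemma isometry_pow (hS : adjoint S * S = 1) (k : ℕ) : Isometry (S ^ k) :=
  AddMonoidHomClass.isometry_of_norm _ (norm_pow_app hS k)

lemma range_pow_closed (hS : adjoint S * S = 1) (k : ℕ) :
    IsClosed ((LinearMap.range ((S ^ k : H →L[ℂ] H) : H →ₗ[ℂ] H) : Submodule ℂ H) : Set H) := by
  have h := (isometry_pow hS k).isClosedEmbedding.isClosed_range
  convert h using 1
  exact LinearMap.coe_range _

lemma ker_adjoint_eq (S : H →L[ℂ] H) :
    LinearMap.ker ((adjoint S : H →L[ℂ] H) : H →ₗ[ℂ] H) = (LinearMap.range (S : H →ₗ[ℂ] H))ᗮ := by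
  ext z
  simp only [LinearMap.mem_ker, Submodule.mem_orthogonal]
  constructor
  · intro h u hu
    obtain ⟨w, rfl⟩ := LinearMap.mem_range.mp hu
    show ⟪S w, z⟫_ℂ = 0
    rw [← adjoint_inner_right, show adjoint S z = 0 from h, inner_zero_right]
  · intro h
    change adjoint S z = 0
    rw [← @inner_self_eq_zero ℂ, adjoint_inner_right]
    exact h _ (LinearMap.mem_range.mpr ⟨_, rfl⟩)

end Aux

section Orth

variable {S : H →L[ℂ] H}

lemma huni_le_hiso_orth (hS : adjoint S * S = 1) : Huni S ≤ (Hiso S)ᗮ := by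
  intro u hu
  unfold Hiso
  rw [← Submodule.orthogonal_orthogonal_eq_closure, Submodule.triorthogonal_eq_orthogonal]
  rw [← Submodule.iInf_orthogonal]
  simp only [Submodule.mem_iInf]
  intro k
  rw [Submodule.mem_orthogonal]
  rintro v hv
  obtain ⟨w, hw, rfl⟩ := Submodule.mem_map.mp hv
  have hwker : adjoint S w = 0 := hw
  -- u ∈ range (S^(k+1))
  have hu' : u ∈ LinearMap.range ((S ^ (k + 1) : H →L[ℂ] H) : H →ₗ[ℂ] H) := by
    exact (Submodule.mem_iInf _).mp hu (k + 1)
  obtain ⟨z, rfl⟩ := LinearMap.mem_range.mp hu'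
  show ⟪(S ^ k) w, (S ^ (k+1)) z⟫_ℂ = 0
  have : (S ^ (k+1)) z = (S ^ k) (S z) := by rw [pow_succ]; rfl
  rw [this, inner_pow hS, ← adjoint_inner_left, hwker, inner_zero_left]

lemma hiso_orth_le_huni (hS : adjoint S * S = 1) : (Hiso S)ᗮ ≤ Huni S := by
  intro x hx
  -- key: ∀ k, x = S^k ((S†)^k x)
  have key : ∀ k : ℕ, x = (S ^ k) (((adjoint S) ^ k) x) := by
    intro k
    induction k with
    | zero => simp
    | succ n ih =>
      set u := ((adjoint S) ^ n) x with hu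
      -- u ⟂ ker S†
      have horth : u ∈ (LinearMap.ker ((adjoint S : H →L[ℂ] H) : H →ₗ[ℂ] H))ᗮ := by
        rw [Submodule.mem_orthogonal]
        intro w hw
        have hw' : adjoint S w = 0 := hw
        have hSkw : (S ^ n) w ∈ Hiso S := by
          apply Submodule.le_topologicalClosure
          apply Submodule.mem_iSup_of_mem n
          exact Submodule.mem_map_of_mem hw
        have h0 : ⟪(S ^ n) w, x⟫_ℂ = 0 := (Submodule.mem_orthogonal _ _).mp hx _ hSkw
        calc ⟪w, u⟫_ℂ = ⟪w, ((adjoint S) ^ n) x⟫_ℂ := rfl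
        _ = ⟪(S ^ n) w, x⟫_ℂ := by rw [← adj_pow, adjoint_inner_right]
        _ = 0 := h0
      -- hence u ∈ range S
      have hrange : u ∈ LinearMap.range (S : H →ₗ[ℂ] H) := by
        have h1 : (LinearMap.ker ((adjoint S : H →L[ℂ] H) : H →ₗ[ℂ] H))ᗮ = LinearMap.range (S : H →ₗ[ℂ] H) := by
          rw [ker_adjoint_eq, Submodule.orthogonal_orthogonal_eq_closure,
            IsClosed.submodule_topologicalClosure_eq]
          have := range_pow_closed hS 1
          simpa using this
        rw [← h1]; exact horth
      obtain ⟨v, hv⟩ := LinearMap.mem_range.mp hrange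
      have hSu : S (adjoint S u) = u := by
        rw [← hv]
        have : adjoint S (S v) = v := by
          calc adjoint S (S v) = (adjoint S * S) v := rfl
          _ = v := by rw [hS]; rfl
        change S (adjoint S (S v)) = S v
        rw [this]
      calc x = (S ^ n) u := ih
      _ = (S ^ n) (S (adjoint S u)) := by rw [hSu]
      _ = (S ^ (n + 1)) ((adjoint S ^ (n + 1)) x) := by
            rw [pow_succ S, pow_succ' (adjoint S)]; rfl
  rw [Huni, Submodule.mem_iInf]
  intro k
  exact LinearMap.mem_range.mpr ⟨_, (key k).symm⟩

lemma huni_orth_le_hiso (hS : adjoint S * S = 1) : (Huni S)ᗮ ≤ Hiso S := by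
  have h := Submodule.orthogonal_le (hiso_orth_le_huni hS)
  refine h.trans ?_
  rw [Submodule.orthogonal_orthogonal_eq_closure]
  exact Submodule.topologicalClosure_minimal (Hiso S) le_rfl (Submodule.isClosed_topologicalClosure _)

end Orth

section Proj

lemma proj_mem_eq {P : H →L[ℂ] H} {K : Submodule ℂ H}
    (hP : ∀ x, P x ∈ K ∧ x - P x ∈ Kᗮ) {x : H} (hx : x ∈ K) : P x = x := by
  have h1 : x - P x ∈ K := K.sub_mem hx (hP x).1
  have h2 : x - P x ∈ Kᗮ := (hP x).2
  have : x - P x = 0 := by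
    rw [← @inner_self_eq_zero ℂ]
    exact (Submodule.mem_orthogonal _ _).mp h2 _ h1
  rw [← sub_eq_zero, ← neg_sub, this, neg_zero]

lemma proj_orth_eq_zero {P : H →L[ℂ] H} {K : Submodule ℂ H}
    (hP : ∀ x, P x ∈ K ∧ x - P x ∈ Kᗮ) {x : H} (hx : x ∈ Kᗮ) : P x = 0 := by
  have h1 : P x ∈ Kᗮ := by
    have : P x = x - (x - P x) := by abel
    rw [this]
    exact Kᗮ.sub_mem hx (hP x).2
  rw [← @inner_self_eq_zero ℂ]
  exact (Submodule.mem_orthogonal' _ _).mp h1 _ (hP x).1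

end Proj

section Inv

variable {S : H →L[ℂ] H} {L : Submodule ℂ H}

lemma pow_mem_of_inv (hinv : ∀ x ∈ L, S x ∈ L) (k : ℕ) :
    ∀ x ∈ L, (S ^ k) x ∈ L := by
  induction k with
  | zero => intro x hx; simpa using hx
  | succ n ih =>
    intro x hx
    have : (S ^ (n + 1)) x = S ((S ^ n) x) := by rw [pow_succ']; rfl
    rw [this]
    exact hinv _ (ih x hx)

-- if map S M = M then M ≤ Huni
lemma le_huni_of_map_eq (hS : adjoint S * S = 1) {M : Submodule ℂ H}
    (hM : Submodule.map (S : H →ₗ[ℂ] H) M = M) : M ≤ Huni S := by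
  have key : ∀ k : ℕ, M ≤ LinearMap.range ((S ^ k : H →L[ℂ] H) : H →ₗ[ℂ] H) := by
    intro k
    induction k with
    | zero => intro x _; exact LinearMap.mem_range.mpr ⟨x, by simp⟩
    | succ n ih =>
      intro x hx
      rw [← hM] at hx
      obtain ⟨y, hy, rfl⟩ := Submodule.mem_map.mp hx
      obtain ⟨z, rfl⟩ := LinearMap.mem_range.mp (ih hy)
      refine LinearMap.mem_range.mpr ⟨z, ?_⟩
      rw [pow_succ' S]; rfl
  intro x hx
  rw [Huni, Submodule.mem_iInf]
  exact fun k => key k hx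

lemma huni_closed (hS : adjoint S * S = 1) : IsClosed ((Huni S : Submodule ℂ H) : Set H) := by
  have : ((Huni S : Submodule ℂ H) : Set H) = ⋂ k : ℕ, (LinearMap.range ((S ^ k : H →L[ℂ] H) : H →ₗ[ℂ] H) : Set H) := by
    rw [Huni]
    ext x
    simp [Submodule.mem_iInf, Set.mem_iInter]
  rw [this]
  exact isClosed_iInter fun k => range_pow_closed hS k

-- S maps L ⊓ Huni onto itself
lemma map_inf_huni (hS : adjoint S * S = 1) (hLred : (∀ x ∈ L, S x ∈ L) ∧ ∀ x ∈ L, adjoint S x ∈ L) :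
    Submodule.map (S : H →ₗ[ℂ] H) (L ⊓ Huni S) = L ⊓ Huni S := by
  apply le_antisymm
  · rintro _ ⟨x, ⟨hxL, hxU⟩, rfl⟩
    rw [SetLike.mem_coe] at hxL hxU
    refine ⟨hLred.1 x hxL, ?_⟩
    show S x ∈ Huni S
    rw [Huni, Submodule.mem_iInf]
    intro k
    rw [Huni, Submodule.mem_iInf] at hxU
    ·
      obtain ⟨z, rfl⟩ := LinearMap.mem_range.mp (hxU k)
      refine LinearMap.mem_range.mpr ⟨S z, ?_⟩
      calc (S ^ k) (S z) = (S ^ k * S) z := rfl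
      _ = (S * S ^ k) z := by rw [← pow_succ, ← pow_succ']
      _ = S ((S ^ k) z) := rfl
  · rintro x ⟨hxL, hxU⟩
    rw [SetLike.mem_coe] at hxL hxU
    rw [Huni, Submodule.mem_iInf] at hxU
    obtain ⟨y, hy⟩ := LinearMap.mem_range.mp (hxU 1)
    have hy' : S y = x := by rw [← hy]; simp [pow_one]
    have hyval : y = adjoint S x := by
      rw [← hy']
      calc y = (adjoint S * S) y := by rw [hS]; rfl
      _ = adjoint S (S y) := rfl
    refine Submodule.mem_map.mpr ⟨y, Submodule.mem_inf.mpr ⟨?_, ?_⟩, hy'⟩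
    · rw [hyval]; exact hLred.2 x hxL
    · rw [Huni, Submodule.mem_iInf]
      intro k
      obtain ⟨z, hz⟩ := LinearMap.mem_range.mp (hxU (k + 1))
      refine LinearMap.mem_range.mpr ⟨z, ?_⟩
      -- S ((S^k) z) = S^(k+1) z = x = S y, injectivity
      have hinj : Function.Injective S := by
        intro a b hab
        have ha : (adjoint S * S) a = (adjoint S * S) b := by
          show adjoint S (S a) = adjoint S (S b); rw [hab]
        rwa [hS, ContinuousLinearMap.one_apply, ContinuousLinearMap.one_apply] at ha
      apply hinj
      rw [hy']
      calc S ((S ^ k) z) = (S * S ^ k) z := rfl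
      _ = (S ^ (k+1)) z := by rw [← pow_succ']
      _ = x := hz

end Inv

section Key

variable {S : H →L[ℂ] H}

lemma key_decomp (hS : adjoint S * S = 1) {L : Submodule ℂ H}
    (hLclosed : IsClosed (L : Set H))
    (hLred : (∀ x ∈ L, S x ∈ L) ∧ ∀ x ∈ L, adjoint S x ∈ L)
    {x : H} (hx : x ∈ L) :
    ∃ y ∈ L ⊓ Huni S, x - y ∈ (Huni S)ᗮ := by
  set T := adjoint S with hT
  set f : ℕ → H := fun k => (S ^ k) ((T ^ k) x) with hf
  have hinner : ∀ k m : ℕ, ⟪f k, f (k + m)⟫_ℂ = ⟪(T ^ (k+m)) x, (T ^ (k+m)) x⟫_ℂ := by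
    intro k m
    have h1 : f (k + m) = (S ^ k) ((S ^ m) ((T ^ (k+m)) x)) := by
      show (S ^ (k+m)) ((T ^ (k+m)) x) = _
      rw [pow_add]; rfl
    show ⟪(S ^ k) ((T ^ k) x), f (k+m)⟫_ℂ = _
    rw [h1, inner_pow hS, ← adjoint_inner_left, adj_pow, ← hT]
    congr 1
    calc (T ^ m) ((T ^ k) x) = (T ^ m * T ^ k) x := rfl
    _ = (T ^ (k + m)) x := by rw [← pow_add, add_comm]
  set a : ℕ → ℝ := fun k => ‖(T ^ k) x‖ ^ 2 with ha
  have hfnorm : ∀ k, ‖f k‖ = ‖(T ^ k) x‖ := fun k => norm_pow_app hS k _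
  have hsub : ∀ k m : ℕ, ‖f k - f (k + m)‖ ^ 2 = a k - a (k + m) := by
    intro k m
    rw [@norm_sub_sq ℂ, hinner k m, hfnorm, hfnorm]
    have : RCLike.re (⟪(T ^ (k+m)) x, (T ^ (k+m)) x⟫_ℂ) = ‖(T ^ (k+m)) x‖ ^ 2 :=
      @inner_self_eq_norm_sq ℂ _ _ _ _ _
    rw [this]
    ring
  have hanti : Antitone a := by
    apply antitone_nat_of_succ_le
    intro n
    have := hsub n 1
    nlinarith [sq_nonneg ‖f n - f (n + 1)‖, norm_nonneg (f n - f (n+1))]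
  have hbdd : BddBelow (Set.range a) := ⟨0, by rintro _ ⟨k, rfl⟩; positivity⟩
  have hatend : Filter.Tendsto a Filter.atTop (nhds (⨅ k, a k)) :=
    tendsto_atTop_ciInf hanti hbdd
  have hacauchy : CauchySeq a := hatend.cauchySeq
  have hfcauchy : CauchySeq f := by
    rw [Metric.cauchySeq_iff]
    intro ε hε
    obtain ⟨N, hN⟩ := Metric.cauchySeq_iff.mp hacauchy (ε ^ 2) (by positivity)
    refine ⟨N, fun m hm n hn => ?_⟩
    have key : ∀ p q : ℕ, p ≥ N → q ≥ N → p ≤ q → dist (f p) (f q) < ε := by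
      intro p q hp hq hpq
      obtain ⟨t, rfl⟩ := Nat.exists_eq_add_of_le hpq
      have h1 : dist (f p) (f (p + t)) ^ 2 = a p - a (p + t) := by
        rw [dist_eq_norm]; exact hsub p t
      have h2 : dist (a p) (a (p + t)) < ε ^ 2 := hN p hp (p + t) (le_trans hp (Nat.le_add_right _ _))
      rw [Real.dist_eq] at h2
      have h3 : a p - a (p + t) ≤ |a p - a (p + t)| := le_abs_self _
      have h4 : dist (f p) (f (p + t)) ^ 2 < ε ^ 2 := by rw [h1]; linarith
      exact lt_of_pow_lt_pow_left₀ 2 hε.le h4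
    rcases le_total m n with h | h
    · exact key m n hm hn h
    · rw [dist_comm]; exact key n m hn hm h
  obtain ⟨y, hy⟩ := cauchySeq_tendsto_of_complete hfcauchy
  have hfL : ∀ k, f k ∈ L := by
    intro k
    exact pow_mem_of_inv hLred.1 k _ (pow_mem_of_inv hLred.2 k x hx)
  have hyL : y ∈ L := hLclosed.mem_of_tendsto hy (Filter.Eventually.of_forall hfL)
  have hyU : y ∈ Huni S := by
    rw [Huni, Submodule.mem_iInf]
    intro k
    have : ∀ᶠ j in Filter.atTop, f j ∈ (LinearMap.range ((S ^ k : H →L[ℂ] H) : H →ₗ[ℂ] H) : Submodule ℂ H) := by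
      rw [Filter.eventually_atTop]
      refine ⟨k, fun j hj => ?_⟩
      obtain ⟨t, rfl⟩ := Nat.exists_eq_add_of_le hj
      refine LinearMap.mem_range.mpr ⟨(S ^ t) ((T ^ (k + t)) x), ?_⟩
      show (S ^ k) ((S ^ t) ((T ^ (k + t)) x)) = (S ^ (k + t)) ((T ^ (k + t)) x)
      rw [pow_add S k t]; rfl
    exact (range_pow_closed hS k).mem_of_tendsto hy this
  have horth : x - y ∈ (Huni S)ᗮ := by
    rw [Submodule.mem_orthogonal']
    intro u hu
    rw [Huni, Submodule.mem_iInf] at hu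
    have hzero : ∀ k, ⟪x - f k, u⟫_ℂ = 0 := by
      intro k
      obtain ⟨w, rfl⟩ := LinearMap.mem_range.mp (hu k)
      rw [inner_sub_left]
      have h1 : ⟪x, (S ^ k) w⟫_ℂ = ⟪(T ^ k) x, w⟫_ℂ := by
        rw [← adjoint_inner_left, adj_pow, ← hT]
      have h2 : ⟪f k, (S ^ k) w⟫_ℂ = ⟪(T ^ k) x, w⟫_ℂ := inner_pow hS k _ _
      change ⟪x, (S ^ k) w⟫_ℂ - ⟪f k, (S ^ k) w⟫_ℂ = 0
      rw [h1, h2, sub_self]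
    have hlim : Filter.Tendsto (fun k => ⟪x - f k, u⟫_ℂ) Filter.atTop (nhds ⟪x - y, u⟫_ℂ) := by
      exact Filter.Tendsto.inner ((tendsto_const_nhds.sub hy)) tendsto_const_nhds
    have : Filter.Tendsto (fun _ : ℕ => (0 : ℂ)) Filter.atTop (nhds ⟪x - y, u⟫_ℂ) := by
      simpa only [hzero] using hlim
    exact tendsto_nhds_unique this tendsto_const_nhds
  exact ⟨y, Submodule.mem_inf.mpr ⟨hyL, hyU⟩, horth⟩

end Key

theorem statement5 (S : H →L[ℂ] H) (hS : adjoint S * S = 1)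
    (L : Submodule ℂ H) (hLclosed : IsClosed (L : Set H)) (hLred : Reduces S L)
    (PL Piso : H →L[ℂ] H)
    (hPL : IsOrthoProj PL L) (hPiso : IsOrthoProj Piso (Hiso S)) :
    [PureOn S L, L ≤ Hiso S, PL * Piso = PL].TFAE := by
  have hiso_bi : (Hiso S)ᗮᗮ = Hiso S := by
    rw [Submodule.orthogonal_orthogonal_eq_closure]
    exact IsClosed.submodule_topologicalClosure_eq (Submodule.isClosed_topologicalClosure _)
  tfae_have 2 → 3 := by
    intro h2
    ext x
    have hdiff : PL (x - Piso x) = 0 :=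
      proj_orth_eq_zero hPL (Submodule.orthogonal_le h2 (hPiso x).2)
    rw [map_sub] at hdiff
    show PL (Piso x) = PL x
    rw [← sub_eq_zero, ← neg_sub, hdiff, neg_zero]
  tfae_have 3 → 2 := by
    intro h3 x hx
    have horth : (Hiso S)ᗮ ≤ Lᗮ := by
      intro w hw
      have h1 : Piso w = 0 := proj_orth_eq_zero hPiso hw
      have h2 : PL w = 0 := by
        have h := congrFun (congrArg DFunLike.coe h3) w
        show PL w = (0 : H)
        rw [← h]
        show PL (Piso w) = 0
        rw [h1, map_zero]
      have h4 : w - PL w ∈ Lᗮ := (hPL w).2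
      rwa [h2, sub_zero] at h4
    have h5 : L ≤ (Hiso S)ᗮᗮ :=
      le_trans L.le_orthogonal_orthogonal (Submodule.orthogonal_le horth)
    rw [hiso_bi] at h5
    exact h5 hx
  tfae_have 2 → 1 := by
    intro h2 M _ hML hMmap
    have hMuni : M ≤ Huni S := le_huni_of_map_eq hS hMmap
    rw [Submodule.eq_bot_iff]
    intro m hm
    have hm1 : m ∈ Hiso S := h2 (hML hm)
    have hm2 : m ∈ (Hiso S)ᗮ := huni_le_hiso_orth hS (hMuni hm)
    rw [← @inner_self_eq_zero ℂ]
    exact (Submodule.mem_orthogonal _ _).mp hm2 _ hm1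
  tfae_have 1 → 2 := by
    intro h1 x hx
    obtain ⟨y, hyM, hxy⟩ := key_decomp hS hLclosed hLred hx
    have hMclosed : IsClosed ((L ⊓ Huni S : Submodule ℂ H) : Set H) := by
      rw [Submodule.coe_inf]
      exact hLclosed.inter (huni_closed hS)
    have hM : L ⊓ Huni S = ⊥ := h1 _ hMclosed inf_le_left (map_inf_huni hS hLred)
    rw [hM, Submodule.mem_bot] at hyM
    rw [hyM, sub_zero] at hxy
    exact huni_orth_le_hiso hS hxy
  tfae_finish
end

section
/- Let (V_1,...,V_n) be an n-tuple of doubly non-commuting isometries on a complex Hilbert space H, let A = {i_1,...,i_l} ⊆ {1,...,n} be a (possibly empty) set of l distinct indices with complement A^c = {j_1,...,j_{n−l}}, and let W_A be the A-wandering subspace. Then W_A ⊆ H_A; the subspaces V_{i_1}^{k_{i_1}} ⋯ V_{i_l}^{k_{i_l}}(W_A), for (k_{i_1},...,k_{i_l}) ∈ ℕ_0^l, are pairwise orthogonal and H_A = ⊕_{k_{i_1},...,k_{i_l} ≥ 0} V_{i_1}^{k_{i_1}} ⋯ V_{i_l}^{k_{i_l}}(W_A) as a Hilbert (orthogonal)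 direct sum (when A = ∅ this reads H_∅ = W_∅). Furthermore: (1) for all i ∈ A^c, W_A reduces V_i and V_i restricted to W_A is unitary, i.e. V_i(W_A) = W_A; (2) for all i,j ∈ A^c with i ≠ j, the restrictions satisfy (V_i|_{W_A})*(V_j|_{W_A}) = conj(z_{ij})(V_j|_{W_A})(V_i|_{W_A})*; (3) for all i ∈ A, V_i* vanishes on W_A; (4) for every r ∈ {1,...,l} and all k_{i_1},...,k_{i_l} ≥ 0, V_{i_r}(V_{i_1}^{k_{i_1}} ⋯ V_{i_r}^{k_{i_r}} ⋯ V_{i_l}^{k_{i_l}}(W_A)) = V_{i_1}^{k_{i_1}} ⋯ V_{i_r}^{k_{i_r}+1} ⋯ V_{i_l}^{k_{i_l}}(W_A). -/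
open ContinuousLinearMap

variable {H : Type*} [NormedAddCommGroup H] [InnerProductSpace ℂ H] [CompleteSpace H]

/-- `(V 1, ..., V n)` is an `n`-tuple of doubly non-commuting isometries with structure
constants `z i j`: each `V i` is an isometry (`(V i)* (V i) = 1`) and
`(V i)* (V j) = conj (z i j) • (V j) (V i)*` for all `i ≠ j`. -/
def DoublyNonCommuting {n : ℕ} (z : Fin n → Fin n → ℂ) (V : Fin n → H →L[ℂ] H) : Prop :=
  (∀ i, adjoint (V i) * V i = 1) ∧
    ∀ i j, i ≠ j →
      adjoint (V i) * V j = (starRingEnd ℂ) (z i j) • (V j * adjoint (V i))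

/-- The space `H_A = ⋂_{i ∈ A} H_i^iso ∩ ⋂_{i ∈ Aᶜ} H_i^uni` (the range of the
projection `P_A`). -/
noncomputable def HA {n : ℕ} (V : Fin n → H →L[ℂ] H) (A : Finset (Fin n)) : Submodule ℂ H :=
  (⨅ i ∈ A, Hiso (V i)) ⊓ ⨅ i ∈ Aᶜ, Huni (V i)

/-- The ordered product `V_{s 1} ^ (m (s 1)) ⋯ V_{s r} ^ (m (s r))` over a list `s` of
indices. -/
noncomputable def listProdPow {n : ℕ} (V : Fin n → H →L[ℂ] H) (s : List (Fin n))
    (m : Fin n → ℕ) : H →L[ℂ] H :=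
  (s.map fun j => V j ^ m j).prod

/-- The `A`-wandering subspace
`W_A = ⋂_{m} V_{j_1}^{m_{j_1}} ⋯ V_{j_{n-l}}^{m_{j_{n-l}}} (⋂_{i ∈ A} ker (V i)*)`,
where `j_1 < ⋯ < j_{n-l}` enumerates `Aᶜ`. -/
noncomputable def WA {n : ℕ} (V : Fin n → H →L[ℂ] H) (A : Finset (Fin n)) : Submodule ℂ H :=
  ⨅ m : Fin n → ℕ,
    Submodule.map (listProdPow V (Aᶜ.sort (· ≤ ·)) m : H →ₗ[ℂ] H)
      (⨅ i ∈ A, LinearMap.ker ((adjoint (V i) : H →L[ℂ] H) : H →ₗ[ℂ] H))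

/-- The summand `V_{i_1}^{k_{i_1}} ⋯ V_{i_l}^{k_{i_l}} (W_A)` of `H_A`, where
`i_1 < ⋯ < i_l` enumerates `A`. -/
noncomputable def SummandA {n : ℕ} (V : Fin n → H →L[ℂ] H) (A : Finset (Fin n))
    (k : Fin n → ℕ) : Submodule ℂ H :=
  Submodule.map (listProdPow V (A.sort (· ≤ ·)) k : H →ₗ[ℂ] H) (WA V A)


set_option linter.unusedSectionVars false
set_option maxHeartbeats 1000000

/-- `S` and `T` commute up to a nonzero scalar. -/
def Sw (S T : H →L[ℂ] H) : Prop := ∃ c : ℂ, c ≠ 0 ∧ S * T = c • (T * S)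

namespace Sw


theorem symm {S T : H →L[ℂ] H} (h : Sw S T) : Sw T S := by
  obtain ⟨c, hc, h⟩ := h
  exact ⟨c⁻¹, inv_ne_zero hc, by rw [h, smul_smul, inv_mul_cancel₀ hc, one_smul]⟩

theorem one_right (S : H →L[ℂ] H) : Sw S 1 := ⟨1, one_ne_zero, by simp⟩

theorem mul_right {S T₁ T₂ : H →L[ℂ] H} (h₁ : Sw S T₁) (h₂ : Sw S T₂) : Sw S (T₁ * T₂) := by
  obtain ⟨c₁, hc₁, h₁⟩ := h₁
  obtain ⟨c₂, hc₂, h₂⟩ := h₂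
  refine ⟨c₁ * c₂, mul_ne_zero hc₁ hc₂, ?_⟩
  calc S * (T₁ * T₂) = (S * T₁) * T₂ := by rw [mul_assoc]
    _ = c₁ • (T₁ * (S * T₂)) := by rw [h₁, smul_mul_assoc, mul_assoc]
    _ = (c₁ * c₂) • (T₁ * T₂ * S) := by
        rw [h₂, mul_smul_comm, smul_smul, mul_assoc]

theorem pow_right {S T : H →L[ℂ] H} (h : Sw S T) (k : ℕ) : Sw S (T ^ k) := by
  induction k with
  | zero => simpa using one_right S
  | succ k ih => rw [pow_succ]; exact ih.mul_right h

theorem adjoint {S T : H →L[ℂ] H} (h : Sw S T) : Sw (adjoint T) (adjoint S) := by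
  obtain ⟨c, hc, h⟩ := h
  refine ⟨(starRingEnd ℂ) c, by simpa using hc, ?_⟩
  have := congrArg (fun X : H →L[ℂ] H => ContinuousLinearMap.adjoint X) h
  simpa only [← star_eq_adjoint, star_mul, star_smul, Complex.star_def] using this

theorem listProd_right {S : H →L[ℂ] H} {L : List (H →L[ℂ] H)}
    (h : ∀ T ∈ L, Sw S T) : Sw S L.prod := by
  induction L with
  | nil => simpa using one_right S
  | cons a t ih =>
    rw [List.prod_cons]
    exact (h a (List.mem_cons_self)).mul_right (ih fun T hT => h T (List.mem_cons_of_mem a hT))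

end Sw

section DNC

variable {n : ℕ} {z : Fin n → Fin n → ℂ} {V : Fin n → H →L[ℂ] H}

theorem z_ne_zero (hz1 : ∀ i j, i ≠ j → ‖z i j‖ = 1) {i j : Fin n} (h : i ≠ j) :
    z i j ≠ 0 := by
  intro hz; have := hz1 i j h; simp [hz] at this

theorem z_mul_conj (hz1 : ∀ i j, i ≠ j → ‖z i j‖ = 1) {i j : Fin n} (h : i ≠ j) :
    z i j * (starRingEnd ℂ) (z i j) = 1 := by
  have : z i j * (starRingEnd ℂ) (z i j) = (‖z i j‖:ℂ)^2 := by
    exact_mod_cast Complex.mul_conj' (z i j)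
  rw [this, hz1 i j h]; norm_num

theorem inner_V (hV : DoublyNonCommuting z V) (i : Fin n) (x y : H) :
    (inner ℂ (V i x) (V i y) : ℂ) = inner ℂ x y := by
  have : (inner ℂ (V i x) (V i y) : ℂ) = inner ℂ x ((adjoint (V i) * V i) y) := by
    rw [mul_apply_eq_comp]; exact (adjoint_inner_right (V i) x (V i y)).symm
  rw [this, hV.1 i, one_apply_eq_self]

theorem norm_V (hV : DoublyNonCommuting z V) (i : Fin n) (x : H) : ‖V i x‖ = ‖x‖ := by
  have := inner_V hV i x x
  have h2 : ‖V i x‖^2 = ‖x‖^2 := by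
    have a1 := inner_self_eq_norm_sq (𝕜 := ℂ) (V i x)
    have a2 := inner_self_eq_norm_sq (𝕜 := ℂ) x
    have := congrArg Complex.re this
    rw [← a1, ← a2]
    exact_mod_cast this
  nlinarith [norm_nonneg (V i x), norm_nonneg x]

theorem comm_mul (hz1 : ∀ i j, i ≠ j → ‖z i j‖ = 1) (hV : DoublyNonCommuting z V)
    {i j : Fin n} (h : i ≠ j) : V i * V j = z i j • (V j * V i) := by
  ext x
  rw [← sub_eq_zero]
  have key : (inner ℂ (V i (V j x) - z i j • V j (V i x))
      (V i (V j x) - z i j • V j (V i x)) : ℂ) = 0 := by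
    have hadj : adjoint (V i) (V j (V i x)) = (starRingEnd ℂ) (z i j) • V j x := by
      have := congrFun (congrArg DFunLike.coe (hV.2 i j h)) (V i x)
      simp only [mul_apply_eq_comp, smul_apply] at this
      rw [this]
      congr 1
      have := congrFun (congrArg DFunLike.coe (hV.1 i)) x
      simp only [mul_apply_eq_comp, one_apply_eq_self] at this
      rw [this]
    have h1 : (inner ℂ (V i (V j x)) (V i (V j x)) : ℂ) = inner ℂ x x := by
      rw [inner_V hV, inner_V hV]
    have h2 : (inner ℂ (V i (V j x)) (z i j • V j (V i x)) : ℂ) = inner ℂ x x := by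
      rw [inner_smul_right]
      have : (inner ℂ (V i (V j x)) (V j (V i x)) : ℂ)
          = inner ℂ (V j x) (adjoint (V i) (V j (V i x))) := by
        exact (adjoint_inner_right (V i) (V j x) (V j (V i x))).symm
      rw [this, hadj, inner_smul_right, inner_V hV, ← mul_assoc, z_mul_conj hz1 h, one_mul]
    have h3 : (inner ℂ (z i j • V j (V i x)) (V i (V j x)) : ℂ) = inner ℂ x x := by
      rw [← inner_conj_symm, h2, inner_self_conj]
    have h4 : (inner ℂ (z i j • V j (V i x)) (z i j • V j (V i x)) : ℂ) = inner ℂ x x := by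
      rw [inner_smul_right, inner_smul_left, inner_V hV, ← mul_assoc,
        z_mul_conj hz1 h, one_mul, inner_V hV]
    rw [inner_sub_sub_self, h1, h2, h3, h4]; ring
  simpa [mul_apply_eq_comp, smul_apply] using inner_self_eq_zero.mp key

variable (hz1 : ∀ i j, i ≠ j → ‖z i j‖ = 1) (hz2 : ∀ i j, i ≠ j → z j i = (starRingEnd ℂ) (z i j))
  (hV : DoublyNonCommuting z V)

include hz1 in
theorem conj_z_ne_zero {i j : Fin n} (h : i ≠ j) : (starRingEnd ℂ) (z i j) ≠ 0 := by
  simpa using z_ne_zero hz1 h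

include hz1 hV in
theorem sw_starV_V {i j : Fin n} (h : i ≠ j) : Sw (adjoint (V i)) (V j) :=
  ⟨_, conj_z_ne_zero hz1 h, hV.2 i j h⟩

include hz1 hV in
theorem sw_V_V {i j : Fin n} (h : i ≠ j) : Sw (V i) (V j) :=
  ⟨_, z_ne_zero hz1 h, comm_mul hz1 hV h⟩

include hz1 hV in
theorem sw_V_starV {i j : Fin n} (h : i ≠ j) : Sw (V i) (adjoint (V j)) :=
  (sw_starV_V hz1 hV h.symm).symm

include hz1 hV in
theorem sw_starV_starV {i j : Fin n} (h : i ≠ j) : Sw (adjoint (V i)) (adjoint (V j)) :=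
  (sw_V_V hz1 hV h.symm).adjoint

include hz1 hz2 hV in
theorem comm_V_starV {i j : Fin n} (h : i ≠ j) :
    V i * adjoint (V j) = (starRingEnd ℂ) (z i j) • (adjoint (V j) * V i) := by
  have h1 := hV.2 j i h.symm
  rw [hz2 i j h, Complex.conj_conj] at h1
  have := congrArg (fun X : H →L[ℂ] H => (starRingEnd ℂ) (z i j) • X) h1
  simp only [smul_smul] at this
  rw [mul_comm, z_mul_conj hz1 h, one_smul] at this
  exact this.symm

/-- The defect projection `D_i = 1 - V_i V_i*`. -/
noncomputable def Dop (V : Fin n → H →L[ℂ] H) (i : Fin n) : H →L[ℂ] H :=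
  1 - V i * adjoint (V i)

theorem adjoint_D (i : Fin n) : adjoint (Dop V i) = Dop V i := by
  simp only [Dop, ← star_eq_adjoint, star_sub, star_one, star_mul, star_star]

include hz1 hz2 hV in
theorem comm_V_D {i j : Fin n} (h : i ≠ j) : V i * Dop V j = Dop V j * V i := by
  simp only [Dop, mul_sub, sub_mul, mul_one, one_mul]
  congr 1
  calc V i * (V j * adjoint (V j)) = (V i * V j) * adjoint (V j) := by rw [mul_assoc]
    _ = z i j • (V j * (V i * adjoint (V j))) := by
        rw [comm_mul hz1 hV h, smul_mul_assoc, mul_assoc]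
    _ = (z i j * (starRingEnd ℂ) (z i j)) • (V j * (adjoint (V j) * V i)) := by
        rw [comm_V_starV hz1 hz2 hV h, mul_smul_comm, smul_smul]
    _ = V j * adjoint (V j) * V i := by
        rw [z_mul_conj hz1 h, one_smul, mul_assoc]

include hz1 hz2 hV in
theorem comm_starV_D {i j : Fin n} (h : i ≠ j) :
    adjoint (V i) * Dop V j = Dop V j * adjoint (V i) := by
  have := congrArg (fun X : H →L[ℂ] H => ContinuousLinearMap.adjoint X) (comm_V_D hz1 hz2 hV h)
  simp only [← star_eq_adjoint, star_mul, star_star] at this ⊢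
  rw [show star (Dop V j) = Dop V j from by
    simpa only [star_eq_adjoint] using adjoint_D (V := V) j] at this
  exact this.symm

include hV in
theorem starV_mul_D_self (i : Fin n) : adjoint (V i) * Dop V i = 0 := by
  simp only [Dop, mul_sub, mul_one, ← mul_assoc, hV.1 i, one_mul, sub_self]

include hV in
theorem starpow_mul_pow (i : Fin n) (k : ℕ) : adjoint (V i) ^ k * V i ^ k = 1 := by
  induction k with
  | zero => simp
  | succ k ih =>
    rw [pow_succ, pow_succ']
    calc adjoint (V i) ^ k * adjoint (V i) * (V i * V i ^ k)
        = adjoint (V i) ^ k * (adjoint (V i) * V i) * V i ^ k := by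
          simp only [mul_assoc]
      _ = 1 := by rw [hV.1 i, mul_one, ih]

include hV in
theorem norm_V_pow (i : Fin n) (k : ℕ) (x : H) : ‖(V i ^ k) x‖ = ‖x‖ := by
  induction k with
  | zero => simp
  | succ k ih => rw [pow_succ', mul_apply_eq_comp, norm_V hV, ih]

include hV in
theorem norm_starV_pow_le (i : Fin n) (k : ℕ) (x : H) : ‖(adjoint (V i) ^ k) x‖ ≤ ‖x‖ := by
  induction k generalizing x with
  | zero => simp
  | succ k ih =>
    rw [pow_succ, mul_apply_eq_comp]
    calc ‖(adjoint (V i) ^ k) (adjoint (V i) x)‖ ≤ ‖adjoint (V i) x‖ := ih _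
      _ ≤ ‖adjoint (V i)‖ * ‖x‖ := le_opNorm _ _
      _ ≤ ‖x‖ := by
          rw [ContinuousLinearMap.adjoint.norm_map]
          have hle : ‖V i‖ ≤ 1 := by
            refine opNorm_le_bound _ zero_le_one fun y => ?_
            rw [norm_V hV, one_mul]
          nlinarith [norm_nonneg x]


theorem sw_pow_pow {S T : H →L[ℂ] H} (h : Sw S T) (a b : ℕ) : Sw (S ^ a) (T ^ b) :=
  (((h.pow_right b).symm.pow_right a).symm)

theorem listProdPow_nil (V : Fin n → H →L[ℂ] H) (m : Fin n → ℕ) :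
    listProdPow V [] m = 1 := by simp [listProdPow]

theorem listProdPow_cons (V : Fin n → H →L[ℂ] H) (a : Fin n) (t : List (Fin n))
    (m : Fin n → ℕ) : listProdPow V (a :: t) m = V a ^ m a * listProdPow V t m := by
  simp [listProdPow]

theorem listProdPow_congr {s : List (Fin n)} {m m' : Fin n → ℕ}
    (h : ∀ j ∈ s, m j = m' j) : listProdPow V s m = listProdPow V s m' := by
  induction s with
  | nil => rfl
  | cons a t ih =>
    rw [listProdPow_cons, listProdPow_cons, h a (List.mem_cons_self),
      ih fun j hj => h j (List.mem_cons_of_mem a hj)]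

theorem listProdPow_zero {s : List (Fin n)} {m : Fin n → ℕ} (h : ∀ j ∈ s, m j = 0) :
    listProdPow V s m = 1 := by
  induction s with
  | nil => rfl
  | cons a t ih =>
    rw [listProdPow_cons, h a (List.mem_cons_self),
      ih fun j hj => h j (List.mem_cons_of_mem a hj), pow_zero, one_mul]

theorem sw_listProdPow {W : H →L[ℂ] H} {s : List (Fin n)} {m : Fin n → ℕ}
    (h : ∀ j ∈ s, Sw W (V j)) : Sw W (listProdPow V s m) := by
  refine Sw.listProd_right fun T hT => ?_
  obtain ⟨j, hj, rfl⟩ := List.mem_map.mp hT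
  exact (h j hj).pow_right (m j)

theorem listProdPow_single {s : List (Fin n)} (hnd : s.Nodup) {i : Fin n} (hi : i ∈ s)
    {m : Fin n → ℕ} (hm : ∀ j, j ≠ i → m j = 0) : listProdPow V s m = V i ^ m i := by
  induction s with
  | nil => simp at hi
  | cons a t ih =>
    rw [listProdPow_cons]
    rcases eq_or_ne a i with rfl | hne
    · rw [listProdPow_zero fun j hj => hm j fun hji =>
        (List.nodup_cons.mp hnd).1 (hji ▸ hj), mul_one]
    · rw [hm a hne, pow_zero, one_mul]
      exact ih (List.nodup_cons.mp hnd).2 ((List.mem_cons.mp hi).resolve_left fun h => hne h.symm)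

theorem listProdPow_extract (hz1 : ∀ i j, i ≠ j → ‖z i j‖ = 1)
    (hV : DoublyNonCommuting z V) {s : List (Fin n)} (hnd : s.Nodup) {i : Fin n}
    (hi : i ∈ s) (m : Fin n → ℕ) :
    ∃ c : ℂ, c ≠ 0 ∧ listProdPow V s m = c • (V i ^ m i * listProdPow V (s.erase i) m) := by
  induction s with
  | nil => simp at hi
  | cons a t ih =>
    rcases eq_or_ne a i with rfl | hne
    · exact ⟨1, one_ne_zero, by rw [List.erase_cons_head, one_smul, listProdPow_cons]⟩
    · have hit : i ∈ t := (List.mem_cons.mp hi).resolve_left fun h => hne h.symm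
      obtain ⟨c, hc, hct⟩ := ih (List.nodup_cons.mp hnd).2 hit
      obtain ⟨c', hc', hcc⟩ := sw_pow_pow (sw_V_V hz1 hV hne) (m a) (m i)
      refine ⟨c * c', by exact mul_ne_zero hc hc', ?_⟩
      rw [List.erase_cons_tail (by simpa using hne), listProdPow_cons,
        listProdPow_cons, hct]
      calc V a ^ m a * (c • (V i ^ m i * listProdPow V (t.erase i) m))
          = c • ((V a ^ m a * V i ^ m i) * listProdPow V (t.erase i) m) := by
            rw [mul_smul_comm, mul_assoc]
        _ = (c * c') • (V i ^ m i * (V a ^ m a * listProdPow V (t.erase i) m)) := by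
            rw [hcc, smul_mul_assoc, smul_smul, mul_assoc]

theorem listProdPow_update (hz1 : ∀ i j, i ≠ j → ‖z i j‖ = 1)
    (hV : DoublyNonCommuting z V) {s : List (Fin n)} (hnd : s.Nodup) {i : Fin n}
    (hi : i ∈ s) (m : Fin n → ℕ) :
    ∃ c : ℂ, c ≠ 0 ∧ listProdPow V s (Function.update m i (m i + 1)) =
      c • (V i * listProdPow V s m) := by
  obtain ⟨c, hc, hcs⟩ := listProdPow_extract hz1 hV hnd hi (Function.update m i (m i + 1))
  obtain ⟨c', hc', hcs'⟩ := listProdPow_extract hz1 hV hnd hi m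
  have herase : listProdPow V (s.erase i) (Function.update m i (m i + 1)) =
      listProdPow V (s.erase i) m := by
    refine listProdPow_congr fun j hj => ?_
    have : j ≠ i := fun h => (List.Nodup.not_mem_erase hnd) (h ▸ hj)
    simp [Function.update_of_ne this]
  refine ⟨c * c'⁻¹, mul_ne_zero hc (inv_ne_zero hc'), ?_⟩
  rw [hcs, herase, Function.update_self, pow_succ', mul_assoc]
  have : V i ^ m i * listProdPow V (s.erase i) m = c'⁻¹ • listProdPow V s m := by
    rw [hcs', smul_smul, inv_mul_cancel₀ hc', one_smul]
  rw [this, mul_smul_comm, smul_smul]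

theorem clm_map_mul (S T : H →L[ℂ] H) (K : Submodule ℂ H) :
    Submodule.map ((S * T : H →L[ℂ] H) : H →ₗ[ℂ] H) K = Submodule.map (S : H →ₗ[ℂ] H) (Submodule.map (T : H →ₗ[ℂ] H) K) := by
  ext x
  simp only [Submodule.mem_map, mul_apply_eq_comp]
  constructor
  · rintro ⟨u, hu, rfl⟩; exact ⟨T u, ⟨u, hu, rfl⟩, rfl⟩
  · rintro ⟨y, ⟨u, hu, rfl⟩, rfl⟩; exact ⟨u, hu, rfl⟩

theorem clm_map_smul {c : ℂ} (hc : c ≠ 0) (T : H →L[ℂ] H) (K : Submodule ℂ H) :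
    Submodule.map ((c • T : H →L[ℂ] H) : H →ₗ[ℂ] H) K = Submodule.map (T : H →ₗ[ℂ] H) K := by
  ext x
  simp only [Submodule.mem_map, smul_apply]
  constructor
  · rintro ⟨u, hu, rfl⟩; exact ⟨c • u, K.smul_mem c hu, by simp⟩
  · rintro ⟨u, hu, rfl⟩
    exact ⟨c⁻¹ • u, K.smul_mem c⁻¹ hu, by simp [smul_smul, inv_mul_cancel₀ hc]⟩

theorem listProdPow_isometry (hV : DoublyNonCommuting z V) (s : List (Fin n))
    (m : Fin n → ℕ) : adjoint (listProdPow V s m) * listProdPow V s m = 1 := by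
  induction s with
  | nil => rw [listProdPow_nil, ← star_eq_adjoint, star_one, one_mul]
  | cons a t ih =>
    rw [listProdPow_cons, ← star_eq_adjoint, star_mul]
    calc star (listProdPow V t m) * star (V a ^ m a) * (V a ^ m a * listProdPow V t m)
        = star (listProdPow V t m) * (star (V a ^ m a) * V a ^ m a) * listProdPow V t m := by
          simp only [mul_assoc]
      _ = 1 := by
          simp only [star_pow, star_eq_adjoint]
          rw [starpow_mul_pow hV, mul_one, ih]


theorem Sw.refl (S : H →L[ℂ] H) : Sw S S := ⟨1, one_ne_zero, (one_smul _ _).symm⟩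

theorem sw_map_mem {S T : H →L[ℂ] H} (h : Sw S T) {K : Submodule ℂ H}
    (hK : ∀ u ∈ K, S u ∈ K) {x : H} (hx : x ∈ Submodule.map (T : H →ₗ[ℂ] H) K) :
    S x ∈ Submodule.map (T : H →ₗ[ℂ] H) K := by
  obtain ⟨u, hu, rfl⟩ := hx
  obtain ⟨c, hc, hst⟩ := h
  have : S (T u) = T (c • S u) := by
    have := congrFun (congrArg DFunLike.coe hst) u
    simpa [mul_apply_eq_comp, smul_apply, map_smul] using this
  rw [ContinuousLinearMap.coe_coe, this]
  exact ⟨c • S u, Submodule.smul_mem _ c (hK u hu), rfl⟩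

theorem V_starV_cancel (hV : DoublyNonCommuting z V) (i : Fin n) (y : H) :
    adjoint (V i) (V i y) = y := by
  have := congrFun (congrArg DFunLike.coe (hV.1 i)) y
  simpa [mul_apply_eq_comp] using this

theorem mem_KA_iff {A : Finset (Fin n)} {x : H} :
    x ∈ (⨅ i ∈ A, LinearMap.ker ((adjoint (V i) : H →L[ℂ] H) : H →ₗ[ℂ] H)) ↔ ∀ i ∈ A, adjoint (V i) x = 0 := by
  simp [Submodule.mem_iInf, LinearMap.mem_ker]

theorem KA_V_stable (hz1 : ∀ i j, i ≠ j → ‖z i j‖ = 1) (hV : DoublyNonCommuting z V)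
    {A : Finset (Fin n)} {j : Fin n} (hj : j ∉ A) {u : H}
    (hu : u ∈ (⨅ i ∈ A, LinearMap.ker ((adjoint (V i) : H →L[ℂ] H) : H →ₗ[ℂ] H))) :
    V j u ∈ (⨅ i ∈ A, LinearMap.ker ((adjoint (V i) : H →L[ℂ] H) : H →ₗ[ℂ] H)) := by
  rw [mem_KA_iff] at hu ⊢
  intro i hi
  have hij : i ≠ j := fun h => hj (h ▸ hi)
  obtain ⟨c, hc, h⟩ := sw_starV_V hz1 hV hij
  have := congrFun (congrArg DFunLike.coe h) u
  simpa [mul_apply_eq_comp, smul_apply, hu i hi] using this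

theorem KA_starV_stable (hz1 : ∀ i j, i ≠ j → ‖z i j‖ = 1) (hV : DoublyNonCommuting z V)
    {A : Finset (Fin n)} {j : Fin n} (hj : j ∉ A) {u : H}
    (hu : u ∈ (⨅ i ∈ A, LinearMap.ker ((adjoint (V i) : H →L[ℂ] H) : H →ₗ[ℂ] H))) :
    adjoint (V j) u ∈ (⨅ i ∈ A, LinearMap.ker ((adjoint (V i) : H →L[ℂ] H) : H →ₗ[ℂ] H)) := by
  rw [mem_KA_iff] at hu ⊢
  intro i hi
  have hij : i ≠ j := fun h => hj (h ▸ hi)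
  obtain ⟨c, hc, h⟩ := sw_starV_starV hz1 hV hij
  have := congrFun (congrArg DFunLike.coe h) u
  simpa [mul_apply_eq_comp, smul_apply, hu i hi] using this

theorem mem_WA_iff {A : Finset (Fin n)} {x : H} :
    x ∈ WA V A ↔ ∀ m : Fin n → ℕ,
      x ∈ Submodule.map (listProdPow V (Aᶜ.sort (· ≤ ·)) m : H →ₗ[ℂ] H)
        (⨅ i ∈ A, LinearMap.ker ((adjoint (V i) : H →L[ℂ] H) : H →ₗ[ℂ] H)) := by
  simp [WA, Submodule.mem_iInf]

theorem WA_le_ker {A : Finset (Fin n)} {i : Fin n} (hi : i ∈ A) :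
    WA V A ≤ LinearMap.ker ((adjoint (V i) : H →L[ℂ] H) : H →ₗ[ℂ] H) := by
  intro x hx
  have := (mem_WA_iff.mp hx) (fun _ => 0)
  rw [listProdPow_zero (fun _ _ => rfl)] at this
  obtain ⟨u, hu, rfl⟩ := this
  simpa using mem_KA_iff.mp hu i hi

theorem WA_V_stable (hz1 : ∀ i j, i ≠ j → ‖z i j‖ = 1) (hV : DoublyNonCommuting z V)
    {A : Finset (Fin n)} {i : Fin n} (hi : i ∉ A) {x : H} (hx : x ∈ WA V A) :
    V i x ∈ WA V A := by
  rw [mem_WA_iff] at hx ⊢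
  intro m
  refine sw_map_mem ?_ (fun u hu => KA_V_stable hz1 hV hi hu) (hx m)
  refine sw_listProdPow fun j hj => ?_
  rcases eq_or_ne i j with rfl | hij
  · exact Sw.refl _
  · exact sw_V_V hz1 hV hij

theorem WA_starV_stable (hz1 : ∀ i j, i ≠ j → ‖z i j‖ = 1) (hV : DoublyNonCommuting z V)
    {A : Finset (Fin n)} {i : Fin n} (hi : i ∉ A) {x : H} (hx : x ∈ WA V A) :
    adjoint (V i) x ∈ WA V A := by
  have hics : i ∈ Aᶜ.sort (· ≤ ·) := by
    rw [Finset.mem_sort]; exact Finset.mem_compl.mpr hi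
  have hnd : (Aᶜ.sort (· ≤ ·)).Nodup := Finset.sort_nodup _ _
  rw [mem_WA_iff] at hx ⊢
  intro m
  obtain ⟨c, hc, hP⟩ := listProdPow_update hz1 hV hnd hics m
  have hx' := hx (Function.update m i (m i + 1))
  obtain ⟨u, hu, hxu⟩ := hx'
  rw [hP] at hxu
  have : adjoint (V i) x = listProdPow V (Aᶜ.sort (· ≤ ·)) m (c • u) := by
    rw [← hxu]
    simp only [ContinuousLinearMap.coe_coe, smul_apply, mul_apply_eq_comp, map_smul, V_starV_cancel hV]
  rw [this]
  exact ⟨c • u, Submodule.smul_mem _ c hu, rfl⟩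

theorem WA_V_starV (hz1 : ∀ i j, i ≠ j → ‖z i j‖ = 1) (hV : DoublyNonCommuting z V)
    {A : Finset (Fin n)} {i : Fin n} (hi : i ∉ A) {x : H} (hx : x ∈ WA V A) :
    V i (adjoint (V i) x) = x := by
  have hics : i ∈ Aᶜ.sort (· ≤ ·) := by
    rw [Finset.mem_sort]; exact Finset.mem_compl.mpr hi
  have hnd : (Aᶜ.sort (· ≤ ·)).Nodup := Finset.sort_nodup _ _
  obtain ⟨c, hc, hP⟩ := listProdPow_update hz1 hV hnd hics (fun _ => 0)
  obtain ⟨u, hu, hxu⟩ := (mem_WA_iff.mp hx) (Function.update (fun _ => 0) i 1)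
  have h0 : Function.update (fun _ : Fin n => 0) i 1 =
      Function.update (fun _ : Fin n => 0) i ((fun _ : Fin n => 0) i + 1) := by
    funext j; rcases eq_or_ne j i with rfl | hji <;> simp [Function.update, *]
  rw [h0, hP] at hxu
  rw [← hxu]
  simp only [ContinuousLinearMap.coe_coe, smul_apply, mul_apply_eq_comp, map_smul, V_starV_cancel hV]


theorem sw_apply {S T : H →L[ℂ] H} (h : Sw S T) (x : H) :
    ∃ c : ℂ, c ≠ 0 ∧ S (T x) = c • T (S x) := by
  obtain ⟨c, hc, heq⟩ := h
  refine ⟨c, hc, ?_⟩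
  have := congrFun (congrArg DFunLike.coe heq) x
  simpa [mul_apply_eq_comp, smul_apply] using this

theorem WA_le_range (hz1 : ∀ i j, i ≠ j → ‖z i j‖ = 1) {A : Finset (Fin n)} {j : Fin n}
    (hj : j ∉ A) (p : ℕ) {x : H} (hx : x ∈ WA V A) : x ∈ LinearMap.range ((V j ^ p : H →L[ℂ] H) : H →ₗ[ℂ] H) := by
  have hjcs : j ∈ Aᶜ.sort (· ≤ ·) := by
    rw [Finset.mem_sort]; exact Finset.mem_compl.mpr hj
  have hnd : (Aᶜ.sort (· ≤ ·)).Nodup := Finset.sort_nodup _ _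
  have hx' := (mem_WA_iff.mp hx) (Function.update (fun _ => 0) j p)
  rw [listProdPow_single hnd hjcs (fun l hl => Function.update_of_ne hl _ _),
    Function.update_self] at hx'
  obtain ⟨u, hu, rfl⟩ := hx'
  exact ⟨u, rfl⟩

theorem WA_le_HA (hz1 : ∀ i j, i ≠ j → ‖z i j‖ = 1) (hV : DoublyNonCommuting z V)
    (A : Finset (Fin n)) : WA V A ≤ HA V A := by
  intro x hx
  rw [HA, Submodule.mem_inf]
  constructor
  · rw [Submodule.mem_iInf]; intro i; rw [Submodule.mem_iInf]; intro hi
    refine Submodule.le_topologicalClosure _ ?_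
    refine Submodule.mem_iSup_of_mem 0 ?_
    exact ⟨x, WA_le_ker hi hx, by simp⟩
  · rw [Submodule.mem_iInf]; intro j; rw [Submodule.mem_iInf]; intro hj
    rw [Huni, Submodule.mem_iInf]; intro p
    exact WA_le_range hz1 (Finset.mem_compl.mp hj) p hx

theorem SummandA_le_HA (hz1 : ∀ i j, i ≠ j → ‖z i j‖ = 1) (hV : DoublyNonCommuting z V)
    (A : Finset (Fin n)) (k : Fin n → ℕ) : SummandA V A k ≤ HA V A := by
  have hnd : (A.sort (· ≤ ·)).Nodup := Finset.sort_nodup _ _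
  rintro x ⟨w, hw, rfl⟩
  rw [HA, Submodule.mem_inf]
  constructor
  · rw [Submodule.mem_iInf]; intro i; rw [Submodule.mem_iInf]; intro hi
    have hias : i ∈ A.sort (· ≤ ·) := by rw [Finset.mem_sort]; exact hi
    obtain ⟨c, hc, hP⟩ := listProdPow_extract hz1 hV hnd hias k
    have hRw : listProdPow V ((A.sort (· ≤ ·)).erase i) k w ∈ LinearMap.ker ((adjoint (V i) : H →L[ℂ] H) : H →ₗ[ℂ] H) := by
      rw [LinearMap.mem_ker]
      have hsw : Sw (adjoint (V i)) (listProdPow V ((A.sort (· ≤ ·)).erase i) k) := by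
        refine sw_listProdPow fun l hl => ?_
        have : l ≠ i := ((List.Nodup.mem_erase_iff hnd).mp hl).1
        exact sw_starV_V hz1 hV (Ne.symm this)
      obtain ⟨c', hc', heq⟩ := sw_apply hsw w
      rw [ContinuousLinearMap.coe_coe, heq]
      have : adjoint (V i) w = 0 := WA_le_ker hi hw
      rw [this, map_zero, smul_zero]
    refine Submodule.le_topologicalClosure _ ?_
    refine Submodule.mem_iSup_of_mem (k i) ?_
    refine ⟨c • listProdPow V ((A.sort (· ≤ ·)).erase i) k w, Submodule.smul_mem _ c hRw, ?_⟩
    have := congrFun (congrArg DFunLike.coe hP) w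
    simp only [mul_apply_eq_comp, smul_apply] at this
    rw [map_smul]
    exact this.symm
  · rw [Submodule.mem_iInf]; intro j; rw [Submodule.mem_iInf]; intro hj
    rw [Huni, Submodule.mem_iInf]; intro p
    have hj' : j ∉ A := Finset.mem_compl.mp hj
    obtain ⟨u, hu⟩ := WA_le_range hz1 (V := V) hj' p hw
    have hsw : Sw (listProdPow V (A.sort (· ≤ ·)) k) (V j ^ p) := by
      refine Sw.pow_right ?_ p
      refine Sw.symm ?_
      refine sw_listProdPow fun l hl => ?_
      have hl' : l ∈ A := (Finset.mem_sort _).mp hl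
      exact sw_V_V hz1 hV (fun h => hj' (h ▸ hl'))
    obtain ⟨c, hc, heq⟩ := sw_apply hsw u
    rw [← hu, ContinuousLinearMap.coe_coe, ContinuousLinearMap.coe_coe, heq]
    exact ⟨c • listProdPow V (A.sort (· ≤ ·)) k u, by rw [map_smul, ContinuousLinearMap.coe_coe]⟩


theorem inner_V_pow (hV : DoublyNonCommuting z V) (i : Fin n) (p : ℕ) (x y : H) :
    (inner ℂ ((V i ^ p) x) ((V i ^ p) y) : ℂ) = inner ℂ x y := by
  induction p with
  | zero => simp
  | succ p ih => rw [pow_succ', mul_apply_eq_comp, mul_apply_eq_comp, inner_V hV, ih]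

theorem starV_kill (hz1 : ∀ i j, i ≠ j → ‖z i j‖ = 1) (hV : DoublyNonCommuting z V)
    {A : Finset (Fin n)} {a : Fin n} (ha : a ∈ A) {t : List (Fin n)} (hat : a ∉ t)
    (k : Fin n → ℕ) {w : H} (hw : w ∈ WA V A) (d : ℕ) (hd : 0 < d) :
    (adjoint (V a) ^ d) (listProdPow V t k w) = 0 := by
  obtain ⟨d', rfl⟩ := Nat.exists_eq_add_of_lt hd
  have h1 : adjoint (V a) (listProdPow V t k w) = 0 := by
    have hsw : Sw (adjoint (V a)) (listProdPow V t k) := by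
      refine sw_listProdPow fun l hl => ?_
      exact sw_starV_V hz1 hV (fun h => hat (h ▸ hl))
    obtain ⟨c, hc, heq⟩ := sw_apply hsw w
    rw [heq, (by simpa using LinearMap.mem_ker.mp (WA_le_ker ha hw) : adjoint (V a) w = 0), map_zero, smul_zero]
  rw [show 0 + d' + 1 = d' + 1 from by omega, pow_succ, mul_apply_eq_comp, h1, map_zero]

theorem ortho_aux (hz1 : ∀ i j, i ≠ j → ‖z i j‖ = 1) (hV : DoublyNonCommuting z V)
    {A : Finset (Fin n)} {s : List (Fin n)} (hnd : s.Nodup) (hsA : ∀ l ∈ s, l ∈ A)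
    (k k' : Fin n → ℕ) {w w' : H} (hw : w ∈ WA V A) (hw' : w' ∈ WA V A)
    (hdiff : ∃ i ∈ s, k i ≠ k' i) :
    (inner ℂ (listProdPow V s k' w') (listProdPow V s k w) : ℂ) = 0 := by
  induction s with
  | nil => simp at hdiff
  | cons a t ih =>
    have hat : a ∉ t := (List.nodup_cons.mp hnd).1
    have hndt : t.Nodup := (List.nodup_cons.mp hnd).2
    have htA : ∀ l ∈ t, l ∈ A := fun l hl => hsA l (List.mem_cons_of_mem a hl)
    have haA : a ∈ A := hsA a (List.mem_cons_self)
    rw [listProdPow_cons, listProdPow_cons, mul_apply_eq_comp, mul_apply_eq_comp]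
    rcases Nat.lt_trichotomy (k a) (k' a) with hlt | heq | hgt
    · have hrep : k' a = k a + (k' a - k a) := by omega
      rw [hrep, pow_add, mul_apply_eq_comp, inner_V_pow hV]
      rw [← adjoint_adjoint (V a ^ (k' a - k a)),
        adjoint_inner_left (adjoint (V a ^ (k' a - k a)))]
      rw [← star_eq_adjoint, star_pow, star_eq_adjoint,
        starV_kill hz1 hV haA hat k hw _ (by omega : 0 < k' a - k a), inner_zero_right]
    · rw [heq, inner_V_pow hV]
      refine ih hndt htA ?_
      obtain ⟨i, hi, hki⟩ := hdiff
      rcases List.mem_cons.mp hi with rfl | hit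
      · omega
      · exact ⟨i, hit, hki⟩
    · have hrep : k a = k' a + (k a - k' a) := by omega
      rw [hrep, pow_add, mul_apply_eq_comp, inner_V_pow hV]
      rw [← adjoint_inner_left (V a ^ (k a - k' a))]
      rw [← star_eq_adjoint, star_pow, star_eq_adjoint,
        starV_kill hz1 hV haA hat k' hw' _ (by omega : 0 < k a - k' a), inner_zero_left]

theorem SummandA_ortho (hz1 : ∀ i j, i ≠ j → ‖z i j‖ = 1) (hV : DoublyNonCommuting z V)
    {A : Finset (Fin n)} {k k' : Fin n → ℕ} (hdiff : ∃ i ∈ A, k i ≠ k' i) :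
    SummandA V A k ≤ (SummandA V A k')ᗮ := by
  rintro x ⟨w, hw, rfl⟩
  rw [Submodule.mem_orthogonal]
  rintro y ⟨w', hw', rfl⟩
  refine ortho_aux hz1 hV (Finset.sort_nodup _ _) (fun l hl => (Finset.mem_sort _).mp hl)
    k k' hw hw' ?_
  obtain ⟨i, hi, hki⟩ := hdiff
  exact ⟨i, (Finset.mem_sort _).mpr hi, hki⟩


theorem range_cancel {T : H →L[ℂ] H} (hT : adjoint T * T = 1) {w : H}
    (hw : w ∈ LinearMap.range (T : H →ₗ[ℂ] H)) : T (adjoint T w) = w := by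
  obtain ⟨u, rfl⟩ := hw
  have : adjoint T (T u) = u := by
    have := congrFun (congrArg DFunLike.coe hT) u
    simpa [mul_apply_eq_comp] using this
  rw [ContinuousLinearMap.coe_coe, this]

theorem mem_range_of_sw {S T : H →L[ℂ] H} (h : Sw S T) {y : H}
    (hy : y ∈ LinearMap.range (T : H →ₗ[ℂ] H)) : S y ∈ LinearMap.range (T : H →ₗ[ℂ] H) := by
  obtain ⟨u, rfl⟩ := hy
  obtain ⟨c, hc, heq⟩ := sw_apply h u
  rw [ContinuousLinearMap.coe_coe, heq]
  exact ⟨c • S u, by rw [map_smul, ContinuousLinearMap.coe_coe]⟩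

theorem telescope (hV : DoublyNonCommuting z V) (i : Fin n) (N : ℕ) :
    (1 : H →L[ℂ] H) - V i ^ N * adjoint (V i) ^ N =
      ∑ m ∈ Finset.range N, V i ^ m * Dop V i * adjoint (V i) ^ m := by
  induction N with
  | zero => simp
  | succ N ih =>
    rw [Finset.sum_range_succ, ← ih]
    have : V i ^ N * Dop V i * adjoint (V i) ^ N =
        V i ^ N * adjoint (V i) ^ N - V i ^ (N + 1) * adjoint (V i) ^ (N + 1) := by
      rw [Dop, mul_sub, sub_mul, mul_one, pow_succ, pow_succ' (adjoint (V i))]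
      simp only [mul_assoc]
    rw [this]
    abel

/-- The product `∏_{i ∈ s} V_i^{k_i} D_i V_i^{* k_i}`. -/
noncomputable def prodD (V : Fin n → H →L[ℂ] H) (s : List (Fin n)) (k : Fin n → ℕ) :
    H →L[ℂ] H :=
  (s.map fun i => V i ^ k i * Dop V i * adjoint (V i) ^ k i).prod

/-- The product `∏_{i ∈ s} D_i V_i^{* k_i}`. -/
noncomputable def prodStar (V : Fin n → H →L[ℂ] H) (s : List (Fin n)) (k : Fin n → ℕ) :
    H →L[ℂ] H :=
  (s.map fun i => Dop V i * adjoint (V i) ^ k i).prod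

theorem prodD_nil (k : Fin n → ℕ) : prodD V [] k = 1 := rfl

theorem prodD_cons (a : Fin n) (t : List (Fin n)) (k : Fin n → ℕ) :
    prodD V (a :: t) k = V a ^ k a * Dop V a * adjoint (V a) ^ k a * prodD V t k := by
  simp [prodD]

theorem prodStar_nil (k : Fin n → ℕ) : prodStar V [] k = 1 := rfl

theorem prodStar_cons (a : Fin n) (t : List (Fin n)) (k : Fin n → ℕ) :
    prodStar V (a :: t) k = Dop V a * adjoint (V a) ^ k a * prodStar V t k := by
  simp [prodStar]

theorem prodD_congr {s : List (Fin n)} {k k' : Fin n → ℕ} (h : ∀ j ∈ s, k j = k' j) :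
    prodD V s k = prodD V s k' := by
  induction s with
  | nil => rfl
  | cons a t ih =>
    rw [prodD_cons, prodD_cons, h a (List.mem_cons_self),
      ih fun j hj => h j (List.mem_cons_of_mem a hj)]


open Filter Topology in
theorem tendsto_starpow_zero (hV : DoublyNonCommuting z V) {i : Fin n} {x : H}
    (hx : x ∈ Hiso (V i)) :
    Tendsto (fun N => (adjoint (V i) ^ N) x) atTop (𝓝 (0 : H)) := by
  have key : ∀ y ∈ (⨆ q : ℕ, Submodule.map ((V i ^ q : H →L[ℂ] H) : H →ₗ[ℂ] H) (LinearMap.ker ((adjoint (V i) : H →L[ℂ] H) : H →ₗ[ℂ] H))),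
      ∃ N₀ : ℕ, ∀ N ≥ N₀, (adjoint (V i) ^ N) y = 0 := by
    intro y hy
    rw [Submodule.iSup_eq_span] at hy
    induction hy using Submodule.span_induction with
    | mem y hy =>
      obtain ⟨Sq, ⟨q, rfl⟩, hySq⟩ := hy
      obtain ⟨d, hd, rfl⟩ := hySq
      refine ⟨q + 1, fun N hN => ?_⟩
      obtain ⟨r, rfl⟩ : ∃ r, N = q + (r + 1) := ⟨N - q - 1, by omega⟩
      have h1 : (adjoint (V i) ^ (q + (r + 1))) ((V i ^ q) d) =
          (adjoint (V i) ^ (r + 1)) ((adjoint (V i) ^ q) ((V i ^ q) d)) := by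
        rw [show q + (r + 1) = (r + 1) + q from by omega, pow_add, mul_apply_eq_comp]
      have h2 : (adjoint (V i) ^ q) ((V i ^ q) d) = d := by
        have := congrFun (congrArg DFunLike.coe (starpow_mul_pow hV i q)) d
        simpa [mul_apply_eq_comp] using this
      rw [ContinuousLinearMap.coe_coe, h1, h2, pow_succ, mul_apply_eq_comp, (by simpa using LinearMap.mem_ker.mp hd : adjoint (V i) d = 0), map_zero]
    | zero => exact ⟨0, fun N _ => map_zero _⟩
    | add u v _ _ ihu ihv =>
      obtain ⟨N₁, h₁⟩ := ihu
      obtain ⟨N₂, h₂⟩ := ihv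
      exact ⟨max N₁ N₂, fun N hN => by
        rw [map_add, h₁ N (le_trans (le_max_left _ _) hN),
          h₂ N (le_trans (le_max_right _ _) hN), add_zero]⟩
    | smul c u _ ihu =>
      obtain ⟨N₁, h₁⟩ := ihu
      exact ⟨N₁, fun N hN => by rw [map_smul, h₁ N hN, smul_zero]⟩
  rw [Metric.tendsto_atTop]
  intro ε hε
  have hxc : x ∈ closure (↑(⨆ q : ℕ, Submodule.map ((V i ^ q : H →L[ℂ] H) : H →ₗ[ℂ] H)
      (LinearMap.ker ((adjoint (V i) : H →L[ℂ] H) : H →ₗ[ℂ] H))) : Set H) := hx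
  obtain ⟨y, hy, hxy⟩ := Metric.mem_closure_iff.mp hxc ε hε
  obtain ⟨N₀, hN₀⟩ := key y hy
  refine ⟨N₀, fun N hN => ?_⟩
  rw [dist_zero_right]
  calc ‖(adjoint (V i) ^ N) x‖
      = ‖(adjoint (V i) ^ N) (x - y) + (adjoint (V i) ^ N) y‖ := by rw [← map_add, sub_add_cancel]
    _ = ‖(adjoint (V i) ^ N) (x - y)‖ := by rw [hN₀ N hN, add_zero]
    _ ≤ ‖x - y‖ := norm_starV_pow_le hV i N _
    _ < ε := by rwa [← dist_eq_norm]

/-- `F_N = ∏_{i ∈ s} (1 - V_i^N V_i^{*N})`. -/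
noncomputable def FN (V : Fin n → H →L[ℂ] H) (s : List (Fin n)) (N : ℕ) : H →L[ℂ] H :=
  (s.map fun i => (1 : H →L[ℂ] H) - V i ^ N * adjoint (V i) ^ N).prod

theorem FN_nil (N : ℕ) : FN V [] N = 1 := rfl

theorem FN_cons (a : Fin n) (t : List (Fin n)) (N : ℕ) :
    FN V (a :: t) N = ((1 : H →L[ℂ] H) - V a ^ N * adjoint (V a) ^ N) * FN V t N := by
  simp [FN]

open Filter Topology in
theorem tendsto_FN (hV : DoublyNonCommuting z V) {x : H} (s : List (Fin n))
    (hx : ∀ i ∈ s, Tendsto (fun N => (adjoint (V i) ^ N) x) atTop (𝓝 (0 : H))) :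
    Tendsto (fun N => FN V s N x) atTop (𝓝 x) := by
  induction s with
  | nil => simpa [FN_nil] using tendsto_const_nhds
  | cons a t ih =>
    have ihx := ih fun i hi => hx i (List.mem_cons_of_mem a hi)
    have h2 : Tendsto (fun N => (V a ^ N) ((adjoint (V a) ^ N) (FN V t N x))) atTop
        (𝓝 (0 : H)) := by
      rw [tendsto_zero_iff_norm_tendsto_zero]
      refine squeeze_zero (fun N => norm_nonneg _)
        (g := fun N => ‖FN V t N x - x‖ + ‖(adjoint (V a) ^ N) x‖) (fun N => ?_) ?_
      · rw [norm_V_pow hV]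
        calc ‖(adjoint (V a) ^ N) (FN V t N x)‖
            = ‖(adjoint (V a) ^ N) (FN V t N x - x) + (adjoint (V a) ^ N) x‖ := by
              rw [← map_add, sub_add_cancel]
          _ ≤ ‖(adjoint (V a) ^ N) (FN V t N x - x)‖ + ‖(adjoint (V a) ^ N) x‖ :=
              norm_add_le _ _
          _ ≤ ‖FN V t N x - x‖ + ‖(adjoint (V a) ^ N) x‖ := by
              have := norm_starV_pow_le hV a N (FN V t N x - x)
              linarith
      · have ha := (tendsto_zero_iff_norm_tendsto_zero).mp (hx a (List.mem_cons_self))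
        have hb : Tendsto (fun N => ‖FN V t N x - x‖) atTop (𝓝 0) :=
          (tendsto_zero_iff_norm_tendsto_zero).mp (by
            simpa using ihx.sub (tendsto_const_nhds (x := x)))
        simpa using hb.add ha
    have heq : ∀ N, FN V (a :: t) N x =
        FN V t N x - (V a ^ N) ((adjoint (V a) ^ N) (FN V t N x)) := by
      intro N
      rw [FN_cons, mul_apply_eq_comp, sub_apply, one_apply_eq_self, mul_apply_eq_comp]
    simp only [heq]
    simpa using ihx.sub h2


theorem FN_mem_span (hV : DoublyNonCommuting z V) {s : List (Fin n)} (hnd : s.Nodup)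
    (N : ℕ) (x : H) :
    FN V s N x ∈ Submodule.span ℂ {y : H | ∃ k : Fin n → ℕ, y = prodD V s k x} := by
  induction s with
  | nil =>
    refine Submodule.subset_span ⟨fun _ => 0, ?_⟩
    simp [FN_nil, prodD_nil]
  | cons a t ih =>
    have hat : a ∉ t := (List.nodup_cons.mp hnd).1
    have hndt : t.Nodup := (List.nodup_cons.mp hnd).2
    have claim : ∀ g ∈ Submodule.span ℂ {y : H | ∃ k : Fin n → ℕ, y = prodD V t k x},
        ((1 : H →L[ℂ] H) - V a ^ N * adjoint (V a) ^ N) g ∈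
          Submodule.span ℂ {y : H | ∃ k : Fin n → ℕ, y = prodD V (a :: t) k x} := by
      intro g hg
      induction hg using Submodule.span_induction with
      | mem g hg =>
        obtain ⟨k, rfl⟩ := hg
        rw [telescope hV a N, ContinuousLinearMap.sum_apply]
        refine Submodule.sum_mem _ fun m hm => ?_
        refine Submodule.subset_span ⟨Function.update k a m, ?_⟩
        have hcong : prodD V t (Function.update k a m) = prodD V t k :=
          prodD_congr fun j hj => Function.update_of_ne (fun h => hat (by rwa [h] at hj)) m k
        rw [prodD_cons, Function.update_self, hcong]
        simp only [mul_apply_eq_comp]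
      | zero => simpa using Submodule.zero_mem _
      | add u v _ _ ihu ihv => rw [map_add]; exact Submodule.add_mem _ ihu ihv
      | smul c u _ ihu => rw [map_smul]; exact Submodule.smul_mem _ c ihu
    rw [FN_cons, mul_apply_eq_comp]
    exact claim _ (ih hndt)

theorem starV_prodStar_kill (hz1 : ∀ i j, i ≠ j → ‖z i j‖ = 1)
    (hz2 : ∀ i j, i ≠ j → z j i = (starRingEnd ℂ) (z i j)) (hV : DoublyNonCommuting z V)
    {s : List (Fin n)} {i : Fin n} (hi : i ∈ s) (k : Fin n → ℕ) :
    adjoint (V i) * prodStar V s k = 0 := by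
  induction s with
  | nil => simp at hi
  | cons a t ih =>
    rcases eq_or_ne a i with rfl | hne
    · rw [prodStar_cons]
      simp only [← mul_assoc]
      rw [starV_mul_D_self hV, zero_mul, zero_mul]
    · have hit : i ∈ t := (List.mem_cons.mp hi).resolve_left fun h => hne h.symm
      have hia : i ≠ a := fun h => hne h.symm
      have hsw : Sw (adjoint (V i)) (Dop V a * adjoint (V a) ^ k a) := by
        refine Sw.mul_right ⟨1, one_ne_zero, ?_⟩ ((sw_starV_starV hz1 hV hia).pow_right (k a))
        rw [one_smul, comm_starV_D hz1 hz2 hV hia]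
      obtain ⟨c, hc, heq⟩ := hsw
      rw [prodStar_cons, ← mul_assoc, heq, smul_mul_assoc, mul_assoc, ih hit, mul_zero,
        smul_zero]

theorem prodStar_mem_range (hz1 : ∀ i j, i ≠ j → ‖z i j‖ = 1)
    (hz2 : ∀ i j, i ≠ j → z j i = (starRingEnd ℂ) (z i j)) (hV : DoublyNonCommuting z V)
    {j : Fin n} {s : List (Fin n)} (hs : ∀ l ∈ s, l ≠ j) (k : Fin n → ℕ) (M : ℕ) {y : H}
    (hy : y ∈ LinearMap.range ((V j ^ M : H →L[ℂ] H) : H →ₗ[ℂ] H)) :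
    prodStar V s k y ∈ LinearMap.range ((V j ^ M : H →L[ℂ] H) : H →ₗ[ℂ] H) := by
  induction s with
  | nil => rw [prodStar_nil, one_apply_eq_self]; exact hy
  | cons a t ih =>
    have haj : a ≠ j := hs a (List.mem_cons_self)
    have h1 : prodStar V t k y ∈ LinearMap.range ((V j ^ M : H →L[ℂ] H) : H →ₗ[ℂ] H) :=
      ih fun l hl => hs l (List.mem_cons_of_mem a hl)
    have h2 : (adjoint (V a) ^ k a) (prodStar V t k y) ∈ LinearMap.range ((V j ^ M : H →L[ℂ] H) : H →ₗ[ℂ] H) :=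
      mem_range_of_sw (sw_pow_pow (sw_starV_V hz1 hV haj) (k a) M) h1
    have h3 : Dop V a ((adjoint (V a) ^ k a) (prodStar V t k y)) ∈
        LinearMap.range ((V j ^ M : H →L[ℂ] H) : H →ₗ[ℂ] H) := by
      refine mem_range_of_sw (Sw.pow_right ⟨1, one_ne_zero, ?_⟩ M) h2
      rw [one_smul, ← comm_V_D hz1 hz2 hV haj.symm]
    rw [prodStar_cons]
    simpa only [mul_apply_eq_comp] using h3

theorem mem_WA_of_ranges (hz1 : ∀ i j, i ≠ j → ‖z i j‖ = 1) (hV : DoublyNonCommuting z V)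
    {A : Finset (Fin n)} {w : H} (hwK : w ∈ (⨅ i ∈ A, LinearMap.ker ((adjoint (V i) : H →L[ℂ] H) : H →ₗ[ℂ] H)))
    (hw : ∀ j ∉ A, ∀ M, w ∈ LinearMap.range ((V j ^ M : H →L[ℂ] H) : H →ₗ[ℂ] H)) : w ∈ WA V A := by
  have aux : ∀ s : List (Fin n), s.Nodup → (∀ l ∈ s, l ∉ A) → ∀ (m : Fin n → ℕ) (w : H),
      w ∈ (⨅ i ∈ A, LinearMap.ker ((adjoint (V i) : H →L[ℂ] H) : H →ₗ[ℂ] H)) →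
      (∀ l ∈ s, w ∈ LinearMap.range ((V l ^ m l : H →L[ℂ] H) : H →ₗ[ℂ] H)) →
      w ∈ Submodule.map (listProdPow V s m : H →ₗ[ℂ] H) (⨅ i ∈ A, LinearMap.ker ((adjoint (V i) : H →L[ℂ] H) : H →ₗ[ℂ] H)) := by
    intro s
    induction s with
    | nil =>
      intro _ _ m w hwK _
      exact ⟨w, hwK, by rw [ContinuousLinearMap.coe_coe, listProdPow_nil, one_apply_eq_self]⟩
    | cons a t ih =>
      intro hnd hsA m w hwK hwr
      have hat : a ∉ t := (List.nodup_cons.mp hnd).1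
      have haA : a ∉ A := hsA a (List.mem_cons_self)
      have hTT : adjoint (V a ^ m a) * V a ^ m a = 1 := by
        rw [← star_eq_adjoint, star_pow, star_eq_adjoint, starpow_mul_pow hV]
      have hwa := hwr a (List.mem_cons_self)
      have hcan : (V a ^ m a) (adjoint (V a ^ m a) w) = w := range_cancel hTT hwa
      set u := adjoint (V a ^ m a) w with hu
      have hu' : u = (adjoint (V a) ^ m a) w := by
        rw [hu, ← star_eq_adjoint, star_pow, star_eq_adjoint]
      have huK : u ∈ (⨅ i ∈ A, LinearMap.ker ((adjoint (V i) : H →L[ℂ] H) : H →ₗ[ℂ] H)) := by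
        rw [mem_KA_iff]
        intro i hiA
        have hia : i ≠ a := fun h => haA (h ▸ hiA)
        obtain ⟨c, hc, heq⟩ :=
          sw_apply ((sw_starV_starV hz1 hV hia).pow_right (m a)) w
        rw [hu', heq, mem_KA_iff.mp hwK i hiA, map_zero, smul_zero]
      have hur : ∀ l ∈ t, u ∈ LinearMap.range ((V l ^ m l : H →L[ℂ] H) : H →ₗ[ℂ] H) := by
        intro l hl
        have hal : a ≠ l := fun h => hat (h ▸ hl)
        rw [hu']
        exact mem_range_of_sw (sw_pow_pow (sw_starV_V hz1 hV hal) (m a) (m l))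
          (hwr l (List.mem_cons_of_mem a hl))
      obtain ⟨v, hv, hveq⟩ := ih (List.nodup_cons.mp hnd).2
        (fun l hl => hsA l (List.mem_cons_of_mem a hl)) m u huK hur
      refine ⟨v, hv, ?_⟩
      rw [ContinuousLinearMap.coe_coe, listProdPow_cons, mul_apply_eq_comp, show listProdPow V t m v = u from hveq, hcan]
  rw [mem_WA_iff]
  intro m
  refine aux _ (Finset.sort_nodup _ _) (fun l hl => ?_) m w hwK (fun l hl => ?_)
  · exact Finset.mem_compl.mp ((Finset.mem_sort _).mp hl)
  · exact hw l (Finset.mem_compl.mp ((Finset.mem_sort _).mp hl)) (m l)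

theorem prodStar_mem_WA (hz1 : ∀ i j, i ≠ j → ‖z i j‖ = 1)
    (hz2 : ∀ i j, i ≠ j → z j i = (starRingEnd ℂ) (z i j)) (hV : DoublyNonCommuting z V)
    {A : Finset (Fin n)} (k : Fin n → ℕ) {x : H} (hx : x ∈ HA V A) :
    prodStar V (A.sort (· ≤ ·)) k x ∈ WA V A := by
  rw [HA, Submodule.mem_inf] at hx
  refine mem_WA_of_ranges hz1 hV ?_ ?_
  · rw [mem_KA_iff]
    intro i hiA
    have his : i ∈ A.sort (· ≤ ·) := (Finset.mem_sort _).mpr hiA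
    have := congrFun (congrArg DFunLike.coe (starV_prodStar_kill hz1 hz2 hV his k)) x
    simpa [mul_apply_eq_comp] using this
  · intro j hjA M
    have hxr : x ∈ LinearMap.range ((V j ^ M : H →L[ℂ] H) : H →ₗ[ℂ] H) := by
      have h1 := hx.2
      rw [Submodule.mem_iInf] at h1
      have h2 := h1 j
      rw [Submodule.mem_iInf] at h2
      have h3 := h2 (Finset.mem_compl.mpr hjA)
      rw [Huni, Submodule.mem_iInf] at h3
      exact h3 M
    exact prodStar_mem_range hz1 hz2 hV
      (fun l hl h => hjA (by rw [← h]; exact (Finset.mem_sort _).mp hl)) k M hxr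

theorem prodD_normal (hz1 : ∀ i j, i ≠ j → ‖z i j‖ = 1)
    (hz2 : ∀ i j, i ≠ j → z j i = (starRingEnd ℂ) (z i j)) (hV : DoublyNonCommuting z V)
    {s : List (Fin n)} (hnd : s.Nodup) (k : Fin n → ℕ) :
    ∃ c : ℂ, c ≠ 0 ∧ prodD V s k = c • (listProdPow V s k * prodStar V s k) := by
  induction s with
  | nil =>
    exact ⟨1, one_ne_zero, by rw [prodD_nil, listProdPow_nil, prodStar_nil, mul_one, one_smul]⟩
  | cons a t ih =>
    have hat : a ∉ t := (List.nodup_cons.mp hnd).1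
    obtain ⟨c, hc, hct⟩ := ih (List.nodup_cons.mp hnd).2
    have hsw : Sw (Dop V a * adjoint (V a) ^ k a) (listProdPow V t k) := by
      refine sw_listProdPow fun l hl => ?_
      have hla : l ≠ a := fun h => hat (h ▸ hl)
      refine Sw.symm (Sw.mul_right ⟨1, one_ne_zero, ?_⟩
        ((sw_V_starV hz1 hV hla).pow_right (k a)))
      rw [one_smul, comm_V_D hz1 hz2 hV hla]
    obtain ⟨c', hc', heq⟩ := hsw
    refine ⟨c * c', mul_ne_zero hc hc', ?_⟩
    have key : V a ^ k a * Dop V a * adjoint (V a) ^ k a *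
          (listProdPow V t k * prodStar V t k) =
        c' • (V a ^ k a * listProdPow V t k *
          (Dop V a * adjoint (V a) ^ k a * prodStar V t k)) := by
      calc V a ^ k a * Dop V a * adjoint (V a) ^ k a *
            (listProdPow V t k * prodStar V t k)
          = V a ^ k a * ((Dop V a * adjoint (V a) ^ k a * listProdPow V t k) *
              prodStar V t k) := by simp only [mul_assoc]
        _ = V a ^ k a * ((c' • (listProdPow V t k * (Dop V a * adjoint (V a) ^ k a))) *
              prodStar V t k) := by rw [heq]
        _ = c' • (V a ^ k a * (listProdPow V t k *
              ((Dop V a * adjoint (V a) ^ k a) * prodStar V t k))) := by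
            simp only [smul_mul_assoc, mul_smul_comm, mul_assoc]
        _ = c' • (V a ^ k a * listProdPow V t k *
              (Dop V a * adjoint (V a) ^ k a * prodStar V t k)) := by
            simp only [mul_assoc]
    rw [prodD_cons, prodStar_cons, listProdPow_cons, hct, mul_smul_comm, key, smul_smul]

theorem HA_isClosed (hV : DoublyNonCommuting z V) (A : Finset (Fin n)) :
    IsClosed ((HA V A : Submodule ℂ H) : Set H) := by
  rw [HA]
  rw [Submodule.coe_inf]
  refine IsClosed.inter ?_ ?_
  · rw [Submodule.coe_iInf]
    refine isClosed_iInter fun i => ?_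
    rw [Submodule.coe_iInf]
    exact isClosed_iInter fun hi => Submodule.isClosed_topologicalClosure _
  · rw [Submodule.coe_iInf]
    refine isClosed_iInter fun j => ?_
    rw [Submodule.coe_iInf]
    refine isClosed_iInter fun hj => ?_
    rw [Huni, Submodule.coe_iInf]
    refine isClosed_iInter fun M => ?_
    have hiso : Isometry ⇑(V j ^ M) :=
      AddMonoidHomClass.isometry_of_norm _ (norm_V_pow hV j M)
    have : (↑(LinearMap.range ((V j ^ M : H →L[ℂ] H) : H →ₗ[ℂ] H)) : Set H) = Set.range ⇑(V j ^ M) := by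
      rw [LinearMap.coe_range, ContinuousLinearMap.coe_coe]
    rw [this]
    exact hiso.isClosedEmbedding.isClosed_range

open Filter Topology in
theorem HA_le_closure (hz1 : ∀ i j, i ≠ j → ‖z i j‖ = 1)
    (hz2 : ∀ i j, i ≠ j → z j i = (starRingEnd ℂ) (z i j)) (hV : DoublyNonCommuting z V)
    (A : Finset (Fin n)) :
    HA V A ≤ (⨆ k : Fin n → ℕ, SummandA V A k).topologicalClosure := by
  intro x hx
  have hxiso : ∀ i ∈ A, x ∈ Hiso (V i) := by
    intro i hi
    have h1 := (Submodule.mem_inf.mp hx).1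
    rw [Submodule.mem_iInf] at h1
    have h2 := h1 i
    rw [Submodule.mem_iInf] at h2
    exact h2 hi
  have htend : Tendsto (fun N => FN V (A.sort (· ≤ ·)) N x) atTop (𝓝 x) :=
    tendsto_FN hV _ fun i hi =>
      tendsto_starpow_zero hV (hxiso i ((Finset.mem_sort _).mp hi))
  have hmem : ∀ N, FN V (A.sort (· ≤ ·)) N x ∈ (⨆ k : Fin n → ℕ, SummandA V A k) := by
    intro N
    have hnd : (A.sort (· ≤ ·)).Nodup := Finset.sort_nodup _ _
    have h1 := FN_mem_span hV hnd N x
    refine Submodule.span_le.mpr ?_ h1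
    rintro y ⟨k, rfl⟩
    refine SetLike.mem_coe.mpr (Submodule.mem_iSup_of_mem k ?_)
    obtain ⟨c, hc, hnormal⟩ := prodD_normal hz1 hz2 hV hnd k
    have := congrFun (congrArg DFunLike.coe hnormal) x
    simp only [mul_apply_eq_comp, smul_apply] at this
    rw [this]
    refine Submodule.smul_mem _ c ?_
    exact ⟨prodStar V (A.sort (· ≤ ·)) k x, prodStar_mem_WA hz1 hz2 hV k hx, rfl⟩
  have hcl : x ∈ closure (↑(⨆ k : Fin n → ℕ, SummandA V A k) : Set H) :=
    mem_closure_of_tendsto htend (Filter.Eventually.of_forall hmem)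
  rwa [← Submodule.topologicalClosure_coe, SetLike.mem_coe] at hcl

end DNC

theorem statement13 {n : ℕ} (hn : 1 ≤ n) (z : Fin n → Fin n → ℂ)
    (hz1 : ∀ i j, i ≠ j → ‖z i j‖ = 1)
    (hz2 : ∀ i j, i ≠ j → z j i = (starRingEnd ℂ) (z i j))
    (V : Fin n → H →L[ℂ] H) (hV : DoublyNonCommuting z V)
    (A : Finset (Fin n)) :
    WA V A ≤ HA V A ∧
    (∀ k k' : Fin n → ℕ, (∃ i ∈ A, k i ≠ k' i) →
        SummandA V A k ≤ (SummandA V A k')ᗮ) ∧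
    (⨆ k : Fin n → ℕ, SummandA V A k).topologicalClosure = HA V A ∧
    (∀ i ∉ A, Reduces (V i) (WA V A) ∧ UnitaryOn (V i) (WA V A)) ∧
    (∀ i ∉ A, ∀ j, j ∉ A → i ≠ j → ∀ x ∈ WA V A,
        adjoint (V i) (V j x) = (starRingEnd ℂ) (z i j) • V j (adjoint (V i) x)) ∧
    (∀ i ∈ A, ∀ x ∈ WA V A, adjoint (V i) x = 0) ∧
    (∀ r ∈ A, ∀ k : Fin n → ℕ,
        Submodule.map (V r : H →ₗ[ℂ] H) (SummandA V A k) =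
          SummandA V A (Function.update k r (k r + 1))) := by
  refine ⟨WA_le_HA hz1 hV A, fun k k' hdiff => SummandA_ortho hz1 hV hdiff, ?_, ?_, ?_, ?_, ?_⟩
  · exact le_antisymm
      (Submodule.topologicalClosure_minimal _
        (iSup_le fun k => SummandA_le_HA hz1 hV A k) (HA_isClosed hV A))
      (HA_le_closure hz1 hz2 hV A)
  · intro i hi
    refine ⟨⟨fun x hx => WA_V_stable hz1 hV hi hx,
      fun x hx => WA_starV_stable hz1 hV hi hx⟩, ?_⟩
    apply le_antisymm
    · rintro x ⟨w, hw, rfl⟩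
      exact WA_V_stable hz1 hV hi hw
    · intro x hx
      exact ⟨adjoint (V i) x, WA_starV_stable hz1 hV hi hx, WA_V_starV hz1 hV hi hx⟩
  · intro i _ j _ hij x _
    have := congrFun (congrArg DFunLike.coe (hV.2 i j hij)) x
    simpa [mul_apply_eq_comp, smul_apply] using this
  · intro i hi x hx
    exact LinearMap.mem_ker.mp (WA_le_ker hi hx)
  · intro r hr k
    have hras : r ∈ A.sort (· ≤ ·) := (Finset.mem_sort _).mpr hr
    have hnd : (A.sort (· ≤ ·)).Nodup := Finset.sort_nodup _ _
    obtain ⟨c, hc, hP⟩ := listProdPow_update hz1 hV hnd hras k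
    rw [SummandA, SummandA, hP, clm_map_smul hc, clm_map_mul]
end
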